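/- arXiv:0904.0782 — 3 statements merged into one kernel-verified Lean document; each statement's English description precedes it below -/
import Mathlib

section
/- Let λ be a composition of length n, let T and S be regular row standard λ-tableaux, let 1 ≤ a_1 < … < a_q ≤ i < b_q < … < b_1 ≤ n, and let Γ, Γ' ∈ 𝓕_i(a_1,…,a_q; b_1,…,b_q) with Γ ≤ Γ' be such that σ_{Γ,i}(T) and σ_{Γ',i}(S) are well-defined and σ_{Γ',i}(S) ≤ σ_{Γ,i}(T) in the tableau order. Then S ≤ T, and moreover S < T if Γ < Γ'. -/
open Finset

/-- A "flow graph" is a finite set of directed edges with integer vertices. -/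
abbrev FlowGraph : Type := Finset (ℤ × ℤ)

/-- The edges of `E` beginning at `r`. -/
def beginsAt (E : FlowGraph) (r : ℤ) : Finset (ℤ × ℤ) := E.filter (fun e => e.1 = r)

/-- The edges of `E` ending at `r`. -/
def endsAt (E : FlowGraph) (r : ℤ) : Finset (ℤ × ℤ) := E.filter (fun e => e.2 = r)

/-- `E` is a flow with set of sources `A` and set of sinks `B`:
every edge `(s,t)` has `s < t`; the sources and sinks are pairwise distinct;
exactly one edge begins at each source (and none ends there); exactly one edge
ends at each sink (and none begins there); and every other vertex either meets
no edge, or exactly one edge ends at it and exactly one edge begins at it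
(such a vertex is a transit point). -/
structure IsFlow (E : FlowGraph) (A B : Finset ℤ) : Prop where
  edge_lt : ∀ e ∈ E, e.1 < e.2
  disjAB : Disjoint A B
  source_out : ∀ a ∈ A, (beginsAt E a).card = 1
  source_in : ∀ a ∈ A, endsAt E a = ∅
  sink_in : ∀ b ∈ B, (endsAt E b).card = 1
  sink_out : ∀ b ∈ B, beginsAt E b = ∅
  transit : ∀ r : ℤ, r ∉ A → r ∉ B →
      (beginsAt E r = ∅ ∧ endsAt E r = ∅) ∨
      ((beginsAt E r).card = 1 ∧ (endsAt E r).card = 1)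

/-- The set of transit points of the flow `E` with sources `A` and sinks `B`:
the vertices meeting some edge which are neither sources nor sinks. -/
def transitSet (E : FlowGraph) (A B : Finset ℤ) : Finset ℤ :=
  ((E.image Prod.fst) ∪ (E.image Prod.snd)) \ (A ∪ B)

def IsTransitPoint (E : FlowGraph) (A B : Finset ℤ) (r : ℤ) : Prop :=
  r ∈ transitSet E A B

/-- Two vertices are linked if they lie in the same connected component of `E`. -/
def Linked (E : FlowGraph) (x y : ℤ) : Prop :=
  Relation.ReflTransGen (fun u v => (u, v) ∈ E ∨ (v, u) ∈ E) x y

/-- The finset of values of a family of integers. -/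
def srcSet {q : ℕ} (a : Fin q → ℤ) : Finset ℤ := Finset.image a Finset.univ

/-- Membership in `𝓕_i(a_1,…,a_q; b_1,…,b_q)` : a flow with sources the `a j`,
sinks the `b j`, and no transit point greater than `i`. -/
def InF {q : ℕ} (i : ℤ) (a b : Fin q → ℤ) (E : FlowGraph) : Prop :=
  IsFlow E (srcSet a) (srcSet b) ∧
  ∀ r : ℤ, IsTransitPoint E (srcSet a) (srcSet b) r → r ≤ i

/-- A list of edges ordered so that the ends are strictly decreasing. -/
def DescList (l : List (ℤ × ℤ)) : Prop := l.Pairwise (fun e f => f.2 < e.2)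

/-- The order on flows: `Γ < Γ'` iff, enumerating the edges of `Γ` and `Γ'` with
strictly decreasing ends, at the first index where the enumerations differ the
edge of `Γ` has a strictly larger beginning than the edge of `Γ'`. -/
def FlowLt (E E' : FlowGraph) : Prop :=
  ∃ (u v v' : List (ℤ × ℤ)) (e e' : ℤ × ℤ),
    DescList (u ++ e :: v) ∧ DescList (u ++ e' :: v') ∧
    (u ++ e :: v).toFinset = E ∧ (u ++ e' :: v').toFinset = E' ∧
    e'.1 < e.1

/-- The `s`-th component of the vector `ν_m(Γ) = Σ { ε_s | (s,t) edge of Γ, s ≤ m < t }`. -/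
def nuC (E : FlowGraph) (m s : ℤ) : ℤ :=
  ((E.filter (fun e => e.1 = s ∧ s ≤ m ∧ m < e.2)).card : ℤ)

/-- Dominance order: `x ≤ y` iff all initial partial sums (over `1,…,k`) of `x`
are at most those of `y`. -/
def DomLE (x y : ℤ → ℤ) : Prop :=
  ∀ k : ℤ, ∑ j ∈ Finset.Icc 1 k, x j ≤ ∑ j ∈ Finset.Icc 1 k, y j

/-- `lam` is a composition of length `n`: it vanishes outside `{1,…,n}`.
(Rows are indexed by the integers `1,…,n`.) -/
def IsComposition (n : ℤ) (lam : ℤ → ℕ) : Prop :=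
  ∀ r : ℤ, r < 1 ∨ n < r → lam r = 0

/-- A (regular row standard) `lam`-tableau with entries in `{1,…,n}` is modelled
by its rows, each row being the multiset of its entries (which determines the
row standard tableau uniquely): row `r` has `lam r` entries, and every entry of
row `r` lies in `{1,…,n}` and is at least `r`. -/
def IsRegularTab (n : ℤ) (lam : ℤ → ℕ) (T : ℤ → Multiset ℤ) : Prop :=
  (∀ r : ℤ, (T r).card = lam r) ∧
  (∀ r : ℤ, ∀ x ∈ T r, r ≤ x ∧ 1 ≤ x ∧ x ≤ n)

/-- The edges of `E` beginning at `r`. -/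
def outEdges (E : FlowGraph) (r : ℤ) : Finset (ℤ × ℤ) := E.filter (fun e => e.1 = r)

/-- `σ_{Γ,i}(T)`: for every edge `(s,t)` of `Γ`, one entry `t` of row `s` is
replaced by `s`; moreover one entry `k` is added to each row `k = i+1,…,n`. -/
def sigmaTab (E : FlowGraph) (i n : ℤ) (T : ℤ → Multiset ℤ) : ℤ → Multiset ℤ :=
  fun r =>
    (T r - (outEdges E r).val.map Prod.snd)
      + Multiset.replicate (outEdges E r).card r
      + (if i < r ∧ r ≤ n then {r} else 0)

/-- `σ_{Γ,i}(T)` is well-defined: for every edge `(s,t)` of `Γ`, row `s` of `T`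
contains an entry `t`. -/
def SigmaDefined (E : FlowGraph) (T : ℤ → Multiset ℤ) : Prop :=
  ∀ e ∈ E, e.2 ∈ T e.1

/-- The length of row `r` of the truncated tableau `T[m]` (all entries `> m`
removed), i.e. the `r`-th component of `shape (T[m])`. -/
def shapeR (T : ℤ → Multiset ℤ) (m r : ℤ) : ℕ :=
  ((T r).filter (fun x => x ≤ m)).card

/-- The `m`-th component of `chain(T)`, i.e. `shape (T[m])`, as a vector of
integers. -/
def shapeVec (T : ℤ → Multiset ℤ) (m : ℤ) : ℤ → ℤ := fun r => (shapeR T m r : ℤ)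

/-- The tableau order: `T < S` iff `chain(T) = (shape T[1],…,shape T[n])` is
smaller than `chain(S)` in the antilexicographic order with the dominance order
on components. -/
def TabLT (n : ℤ) (T S : ℤ → Multiset ℤ) : Prop :=
  ∃ m : ℤ, 1 ≤ m ∧ m ≤ n ∧
    DomLE (shapeVec T m) (shapeVec S m) ∧ shapeVec T m ≠ shapeVec S m ∧
    ∀ m' : ℤ, m < m' → m' ≤ n → shapeVec T m' = shapeVec S m'

/-- `T ≤ S` in the tableau order: `T < S` or `chain(T) = chain(S)`. -/
def TabLE (n : ℤ) (T S : ℤ → Multiset ℤ) : Prop :=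
  TabLT n T S ∨ ∀ m : ℤ, 1 ≤ m → m ≤ n → shapeVec T m = shapeVec S m

/-! ### Auxiliary machinery for the proof -/

/-- Partial sums over `Icc 1 k`. -/
noncomputable def psumZ (f : ℤ → ℤ) (k : ℤ) : ℤ := ∑ j ∈ Finset.Icc 1 k, f j

/-- The correction term coming from the added entries `k = i+1,…,n`. -/
def indZ (i n m r : ℤ) : ℤ := if i < r ∧ r ≤ m ∧ r ≤ n then 1 else 0

lemma aux_domle_iff (x y : ℤ → ℤ) : DomLE x y ↔ ∀ k, psumZ x k ≤ psumZ y k := Iff.rfl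

/-- The shape formula: `shape(σ_{Γ,i}T)[m] = shape(T[m]) + ν_m(Γ) + correction`. -/
lemma aux_shape (E : FlowGraph) (i n : ℤ) (T : ℤ → Multiset ℤ)
    (hdef : SigmaDefined E T) (hlt : ∀ x ∈ E, x.1 < x.2) (m r : ℤ) :
    shapeVec (sigmaTab E i n T) m r
      = shapeVec T m r + nuC E m r + indZ i n m r := by
  classical
  have hnodup : ((outEdges E r).val.map Prod.snd).Nodup := by
    refine Multiset.Nodup.map_on ?_ (outEdges E r).nodup
    intro x hx y hy hxy
    have hx1 : x.1 = r := (Finset.mem_filter.mp (Finset.mem_val.mp hx)).2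
    have hy1 : y.1 = r := (Finset.mem_filter.mp (Finset.mem_val.mp hy)).2
    exact Prod.ext (hx1.trans hy1.symm) hxy
  have hsub : (outEdges E r).val.map Prod.snd ≤ T r := by
    rw [Multiset.le_iff_subset hnodup]
    intro t ht
    obtain ⟨x, hx, rfl⟩ := Multiset.mem_map.mp ht
    have hx' := Finset.mem_filter.mp (Finset.mem_val.mp hx)
    have h := hdef x hx'.1
    rwa [hx'.2] at h
  have hble : (((outEdges E r).val.map Prod.snd).filter (fun x => x ≤ m)).card
      ≤ ((T r).filter (fun x => x ≤ m)).card :=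
    Multiset.card_le_card (Multiset.filter_le_filter _ hsub)
  have hmain : shapeR (sigmaTab E i n T) m r
      = ((T r).filter (fun x => x ≤ m)).card
        - (((outEdges E r).val.map Prod.snd).filter (fun x => x ≤ m)).card
        + ((Multiset.replicate (outEdges E r).card r).filter (fun x => x ≤ m)).card
        + ((if i < r ∧ r ≤ n then ({r} : Multiset ℤ) else 0).filter (fun x => x ≤ m)).card := by
    unfold shapeR sigmaTab
    rw [Multiset.filter_add, Multiset.filter_add, Multiset.card_add, Multiset.card_add,
        Multiset.filter_sub, Multiset.card_sub (Multiset.filter_le_filter _ hsub)]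
  have hrem : (((outEdges E r).val.map Prod.snd).filter (fun x => x ≤ m)).card
      = (E.filter (fun x => x.1 = r ∧ x.2 ≤ m)).card := by
    have hms : ((outEdges E r).val.map Prod.snd).filter (fun x => x ≤ m)
        = ((E.filter (fun x => x.1 = r ∧ x.2 ≤ m)).val).map Prod.snd := by
      rw [Multiset.filter_map]
      congr 1
      have h1 : (outEdges E r).val.filter ((fun x => x ≤ m) ∘ Prod.snd)
          = ((outEdges E r).filter (fun x => x.2 ≤ m)).val := by
        rw [Finset.filter_val]
        exact Multiset.filter_congr (fun x _ => Iff.rfl)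
      rw [h1]
      congr 1
      unfold outEdges
      rw [Finset.filter_filter]
    rw [hms, Multiset.card_map, Finset.card_def]
  have hrep : ((Multiset.replicate (outEdges E r).card r).filter (fun x => x ≤ m)).card
      = if r ≤ m then (outEdges E r).card else 0 := by
    by_cases h : r ≤ m
    · rw [if_pos h, Multiset.filter_eq_self.mpr, Multiset.card_replicate]
      intro x hx; rw [Multiset.eq_of_mem_replicate hx]; exact h
    · rw [if_neg h, Multiset.filter_eq_nil.mpr, Multiset.card_zero]
      intro x hx; rw [Multiset.eq_of_mem_replicate hx]; exact h
  have hite : ((if i < r ∧ r ≤ n then ({r} : Multiset ℤ) else 0).filter (fun x => x ≤ m)).card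
      = if i < r ∧ r ≤ m ∧ r ≤ n then 1 else 0 := by
    by_cases h1 : i < r ∧ r ≤ n
    · rw [if_pos h1]
      by_cases h2 : r ≤ m
      · rw [if_pos ⟨h1.1, h2, h1.2⟩, Multiset.filter_eq_self.mpr, Multiset.card_singleton]
        intro x hx; rw [Multiset.mem_singleton.mp hx]; exact h2
      · rw [if_neg (fun h => h2 h.2.1), Multiset.filter_eq_nil.mpr, Multiset.card_zero]
        intro x hx; rw [Multiset.mem_singleton.mp hx]; exact h2
    · rw [if_neg h1, if_neg (fun h => h1 ⟨h.1, h.2.2⟩), Multiset.filter_zero, Multiset.card_zero]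
  have hsplit : (outEdges E r).card
      = (E.filter (fun x => x.1 = r ∧ x.2 ≤ m)).card
        + (E.filter (fun x => x.1 = r ∧ m < x.2)).card := by
    have ha : E.filter (fun x => x.1 = r ∧ x.2 ≤ m)
        = (E.filter (fun x => x.1 = r)).filter (fun x => x.2 ≤ m) := by
      rw [Finset.filter_filter]
    have hbn : E.filter (fun x => x.1 = r ∧ m < x.2)
        = (E.filter (fun x => x.1 = r)).filter (fun x => ¬ x.2 ≤ m) := by
      rw [Finset.filter_filter]
      exact Finset.filter_congr fun x _ => by constructor <;> intro h <;>
        exact ⟨h.1, by omega⟩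
    rw [ha, hbn, Finset.card_filter_add_card_filter_not]
    rfl
  unfold shapeVec indZ nuC
  rw [hmain, hrem, hrep, hite]
  by_cases hrm : r ≤ m
  · have hnu2 : (E.filter fun x => x.1 = r ∧ r ≤ m ∧ m < x.2)
        = (E.filter fun x => x.1 = r ∧ m < x.2) :=
      Finset.filter_congr fun x _ => by constructor <;> intro h <;> [exact ⟨h.1, h.2.2⟩;
        exact ⟨h.1, hrm, h.2⟩]
    rw [hnu2, if_pos hrm]
    unfold shapeR
    by_cases hD : i < r ∧ r ≤ m ∧ r ≤ n
    · rw [if_pos hD, if_pos hD]; omega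
    · rw [if_neg hD, if_neg hD]; omega
  · have hB1 : (E.filter fun x => x.1 = r ∧ x.2 ≤ m) = ∅ :=
      Finset.filter_eq_empty_iff.mpr (fun x hx h => by have := hlt x hx; omega)
    have hnu0 : (E.filter fun x => x.1 = r ∧ r ≤ m ∧ m < x.2) = ∅ :=
      Finset.filter_eq_empty_iff.mpr (fun x hx h => hrm h.2.1)
    rw [hB1, hnu0, if_neg hrm, if_neg (fun h => hrm h.2.1), if_neg (fun h => hrm h.2.1)]
    unfold shapeR
    simp only [Finset.card_empty]
    omega

/-- Flow conservation: the number of edges crossing level `m` only depends on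
the sources and the sinks. -/
lemma aux_conserv {E : FlowGraph} {A B : Finset ℤ} (hE : IsFlow E A B) (m : ℤ) :
    ((E.filter (fun x => x.1 ≤ m ∧ m < x.2)).card : ℤ)
      = ((A.filter (fun x => x ≤ m)).card : ℤ) - ((B.filter (fun x => x ≤ m)).card : ℤ) := by
  classical
  set V : Finset ℤ := (E.image Prod.fst ∪ E.image Prod.snd).filter (fun x => x ≤ m) with hV
  have hsrc : (E.filter (fun x => x.1 ≤ m)).card = ∑ r ∈ V, (beginsAt E r).card := by
    rw [Finset.card_eq_sum_card_fiberwise (f := Prod.fst) (t := V)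
      (fun x hx => by
        have hx' := Finset.mem_filter.mp hx
        exact Finset.mem_filter.mpr
          ⟨Finset.mem_union_left _ (Finset.mem_image_of_mem _ hx'.1), hx'.2⟩)]
    refine Finset.sum_congr rfl fun r hr => ?_
    have hrm : r ≤ m := (Finset.mem_filter.mp hr).2
    rw [Finset.filter_filter]
    unfold beginsAt
    refine congrArg _ (Finset.filter_congr fun x _ => ?_)
    constructor
    · intro h; exact h.2
    · intro h; exact ⟨by rw [h]; exact hrm, h⟩
  have hsnk : (E.filter (fun x => x.2 ≤ m)).card = ∑ r ∈ V, (endsAt E r).card := by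
    rw [Finset.card_eq_sum_card_fiberwise (f := Prod.snd) (t := V)
      (fun x hx => by
        have hx' := Finset.mem_filter.mp hx
        exact Finset.mem_filter.mpr
          ⟨Finset.mem_union_right _ (Finset.mem_image_of_mem _ hx'.1), hx'.2⟩)]
    refine Finset.sum_congr rfl fun r hr => ?_
    have hrm : r ≤ m := (Finset.mem_filter.mp hr).2
    rw [Finset.filter_filter]
    unfold endsAt
    refine congrArg _ (Finset.filter_congr fun x _ => ?_)
    constructor
    · intro h; exact h.2
    · intro h; exact ⟨by rw [h]; exact hrm, h⟩
  have hterm : ∀ r ∈ V, ((beginsAt E r).card : ℤ) - ((endsAt E r).card : ℤ)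
      = (if r ∈ A then (1 : ℤ) else 0) - (if r ∈ B then (1 : ℤ) else 0) := by
    intro r _
    by_cases hA : r ∈ A
    · rw [if_pos hA, hE.source_out r hA, hE.source_in r hA,
        if_neg (fun hB => (Finset.disjoint_left.mp hE.disjAB hA) hB)]
      simp
    · by_cases hB : r ∈ B
      · rw [if_neg hA, if_pos hB, hE.sink_out r hB, hE.sink_in r hB]; simp
      · rw [if_neg hA, if_neg hB]
        rcases hE.transit r hA hB with ⟨hb, he⟩ | ⟨hb, he⟩
        · rw [hb, he]; simp
        · rw [hb, he]; simp
  have hVA : V.filter (fun r => r ∈ A) = A.filter (fun x => x ≤ m) := by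
    ext x
    simp only [hV, Finset.mem_filter, Finset.mem_union, Finset.mem_image]
    constructor
    · rintro ⟨⟨_, hxm⟩, hxA⟩; exact ⟨hxA, hxm⟩
    · rintro ⟨hxA, hxm⟩
      refine ⟨⟨?_, hxm⟩, hxA⟩
      left
      obtain ⟨y, hy⟩ := Finset.card_eq_one.mp (hE.source_out x hxA)
      have hmem : y ∈ beginsAt E x := hy ▸ Finset.mem_singleton_self y
      have hy' := Finset.mem_filter.mp hmem
      exact ⟨y, hy'.1, hy'.2⟩
  have hVB : V.filter (fun r => r ∈ B) = B.filter (fun x => x ≤ m) := by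
    ext x
    simp only [hV, Finset.mem_filter, Finset.mem_union, Finset.mem_image]
    constructor
    · rintro ⟨⟨_, hxm⟩, hxB⟩; exact ⟨hxB, hxm⟩
    · rintro ⟨hxB, hxm⟩
      refine ⟨⟨?_, hxm⟩, hxB⟩
      right
      obtain ⟨y, hy⟩ := Finset.card_eq_one.mp (hE.sink_in x hxB)
      have hmem : y ∈ endsAt E x := hy ▸ Finset.mem_singleton_self y
      have hy' := Finset.mem_filter.mp hmem
      exact ⟨y, hy'.1, hy'.2⟩
  have hsum : ((E.filter (fun x => x.1 ≤ m)).card : ℤ)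
      - ((E.filter (fun x => x.2 ≤ m)).card : ℤ)
      = ((A.filter (fun x => x ≤ m)).card : ℤ) - ((B.filter (fun x => x ≤ m)).card : ℤ) := by
    rw [hsrc, hsnk]
    push_cast
    rw [← Finset.sum_sub_distrib, Finset.sum_congr rfl hterm, Finset.sum_sub_distrib,
        Finset.sum_boole, Finset.sum_boole, hVA, hVB]
  have hsplit : (E.filter (fun x => x.1 ≤ m)).card
      = (E.filter (fun x => x.1 ≤ m ∧ m < x.2)).card
        + (E.filter (fun x => x.2 ≤ m)).card := by
    have ha : E.filter (fun x => x.1 ≤ m ∧ m < x.2)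
        = (E.filter (fun x => x.1 ≤ m)).filter (fun x => m < x.2) := by
      rw [Finset.filter_filter]
    have hb : E.filter (fun x => x.2 ≤ m)
        = (E.filter (fun x => x.1 ≤ m)).filter (fun x => ¬ m < x.2) := by
      rw [Finset.filter_filter]
      refine Finset.filter_congr fun x hx => ?_
      have := hE.edge_lt x hx
      constructor
      · intro h; omega
      · intro h; omega
    rw [ha, hb, Finset.card_filter_add_card_filter_not]
  omega

lemma aux_desc_parts {u v : List (ℤ × ℤ)} {e : ℤ × ℤ} (hd : DescList (u ++ e :: v)) :
    (∀ x ∈ u, e.2 < x.2) ∧ (∀ x ∈ v, x.2 < e.2) := by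
  have hd2 : (u ++ e :: v).Pairwise (fun e f => f.2 < e.2) := hd
  rw [List.pairwise_append] at hd2
  obtain ⟨_, h2, h3⟩ := hd2
  constructor
  · intro x hx; exact h3 x hx e (by simp)
  · intro x hx; exact (List.pairwise_cons.mp h2).1 x hx

lemma aux_filterset_lt {u v : List (ℤ × ℤ)} {e : ℤ × ℤ} (hd : DescList (u ++ e :: v)) {m : ℤ}
    (hm : m < e.2) (hv : ∀ x ∈ v, x.2 ≤ m) :
    ((u ++ e :: v).toFinset).filter (fun x => m < x.2) = insert e u.toFinset := by
  have hu := (aux_desc_parts hd).1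
  ext x
  simp only [Finset.mem_filter, List.mem_toFinset, List.mem_append, List.mem_cons,
    Finset.mem_insert]
  constructor
  · rintro ⟨h | h | h, hx2⟩
    · exact Or.inr h
    · exact Or.inl h
    · exact absurd hx2 (by have := hv x h; omega)
  · rintro (rfl | h)
    · exact ⟨Or.inr (Or.inl rfl), hm⟩
    · exact ⟨Or.inl h, by have := hu x h; omega⟩

lemma aux_filterset_ge {u v : List (ℤ × ℤ)} {e : ℤ × ℤ} (hd : DescList (u ++ e :: v)) {m : ℤ}
    (hm : e.2 ≤ m) :
    ((u ++ e :: v).toFinset).filter (fun x => m < x.2)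
      = u.toFinset.filter (fun x => m < x.2) := by
  have hv := (aux_desc_parts hd).2
  ext x
  simp only [Finset.mem_filter, List.mem_toFinset, List.mem_append, List.mem_cons]
  constructor
  · rintro ⟨h | h | h, hx2⟩
    · exact ⟨h, hx2⟩
    · subst h; exact absurd hx2 (by omega)
    · exact absurd hx2 (by have := hv x h; omega)
  · rintro ⟨h, hx2⟩; exact ⟨Or.inl h, hx2⟩

lemma aux_snd_eq_false {A B : Finset ℤ} {E E' : FlowGraph}
    (hE : IsFlow E A B) (hE' : IsFlow E' A B)
    {u v v' : List (ℤ × ℤ)} {e e' : ℤ × ℤ}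
    (hd : DescList (u ++ e :: v)) (hd' : DescList (u ++ e' :: v'))
    (hEl : (u ++ e :: v).toFinset = E) (hE'l : (u ++ e' :: v').toFinset = E')
    (hlt : e'.2 < e.2) : False := by
  classical
  set m := e.2 - 1 with hm
  have heE : e ∈ E := by
    rw [← hEl]; exact List.mem_toFinset.mpr (by simp)
  have he_u : e ∉ u.toFinset := fun h =>
    absurd ((aux_desc_parts hd).1 e (List.mem_toFinset.mp h)) (lt_irrefl _)
  have hs1 : E.filter (fun x => m < x.2) = insert e u.toFinset := by
    rw [← hEl]
    exact aux_filterset_lt hd (by omega)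
      (fun x hx => by have := (aux_desc_parts hd).2 x hx; omega)
  have hs2 : E'.filter (fun x => m < x.2) = u.toFinset := by
    rw [← hE'l, aux_filterset_ge hd' (by omega)]
    refine Finset.filter_true_of_mem fun x hx => ?_
    have := (aux_desc_parts hd).1 x (List.mem_toFinset.mp hx); omega
  have key : ∀ F : FlowGraph, F.filter (fun x => x.1 ≤ m ∧ m < x.2)
      = (F.filter (fun x => m < x.2)).filter (fun x => x.1 ≤ m) := by
    intro F
    rw [Finset.filter_filter]
    exact Finset.filter_congr fun x _ => ⟨fun h => ⟨h.2, h.1⟩, fun h => ⟨h.2, h.1⟩⟩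
  have hc := aux_conserv hE m
  have hc' := aux_conserv hE' m
  rw [key, hs1] at hc
  rw [key, hs2] at hc'
  have he1 : e.1 ≤ m := by have := hE.edge_lt e heE; omega
  rw [Finset.filter_insert, if_pos he1,
      Finset.card_insert_of_notMem (fun h => he_u (Finset.filter_subset _ _ h))] at hc
  omega

lemma aux_min_start {E : FlowGraph} {A B : Finset ℤ} (hE : IsFlow E A B)
    (hne : E.Nonempty) : ∃ s ∈ A, ∀ x ∈ E, s ≤ x.1 := by
  classical
  have hVne : (E.image Prod.fst).Nonempty := hne.image _
  obtain ⟨x0, hx0, hx01⟩ := Finset.mem_image.mp ((E.image Prod.fst).min'_mem hVne)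
  have hmin : ∀ x ∈ E, (E.image Prod.fst).min' hVne ≤ x.1 :=
    fun x hx => Finset.min'_le _ _ (Finset.mem_image_of_mem _ hx)
  refine ⟨(E.image Prod.fst).min' hVne, ?_, hmin⟩
  by_contra hsA
  have hbeg : x0 ∈ beginsAt E ((E.image Prod.fst).min' hVne) :=
    Finset.mem_filter.mpr ⟨hx0, hx01⟩
  have hsB : (E.image Prod.fst).min' hVne ∉ B := by
    intro hsB
    rw [hE.sink_out _ hsB] at hbeg
    exact absurd hbeg (Finset.notMem_empty _)
  rcases hE.transit _ hsA hsB with ⟨h0, _⟩ | ⟨_, hone⟩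
  · rw [h0] at hbeg; exact absurd hbeg (Finset.notMem_empty _)
  · obtain ⟨y, hy⟩ := Finset.card_eq_one.mp hone
    have hyE : y ∈ endsAt E ((E.image Prod.fst).min' hVne) := hy ▸ Finset.mem_singleton_self y
    have hy' := Finset.mem_filter.mp hyE
    have h1 := hE.edge_lt y hy'.1
    have h2 := hmin y hy'.1
    omega

lemma aux_end_le {q : ℕ} {i n : ℤ} {a b : Fin q → ℤ} {E : FlowGraph} (hE : InF i a b E)
    (h2 : ∀ j, b j ≤ n) (hbi : ∀ j, i < b j) (j0 : Fin q) :
    ∀ x ∈ E, x.2 ≤ n := by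
  intro x hx
  by_cases hB : x.2 ∈ srcSet b
  · obtain ⟨j, _, hj⟩ := Finset.mem_image.mp hB
    rw [← hj]; exact h2 j
  · have hA : x.2 ∉ srcSet a := by
      intro hA
      have h0 := hE.1.source_in _ hA
      have hxm : x ∈ endsAt E x.2 := Finset.mem_filter.mpr ⟨hx, rfl⟩
      rw [h0] at hxm
      exact absurd hxm (Finset.notMem_empty _)
    have htr : IsTransitPoint E (srcSet a) (srcSet b) x.2 := by
      unfold IsTransitPoint transitSet
      rw [Finset.mem_sdiff]
      refine ⟨Finset.mem_union_right _ (Finset.mem_image_of_mem _ hx), ?_⟩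
      rw [Finset.mem_union]
      rintro (h | h)
      · exact hA h
      · exact hB h
    have hle := hE.2 _ htr
    have := hbi j0
    have := h2 j0
    omega

lemma aux_key {q : ℕ} (n i : ℤ) (a b : Fin q → ℤ)
    (hbi : ∀ j, i < b j) (h1 : ∀ j, 1 ≤ a j) (h2 : ∀ j, b j ≤ n)
    {E E' : FlowGraph} (hE : InF i a b E) (hE' : InF i a b E')
    (hflt : FlowLt E E') :
    ∃ M k0 : ℤ, 1 ≤ M ∧ M ≤ n ∧
      (∀ m, M < m → ∀ s, nuC E m s = nuC E' m s) ∧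
      (∀ k, psumZ (nuC E M) k ≤ psumZ (nuC E' M) k) ∧
      (psumZ (nuC E M) k0 + 1 = psumZ (nuC E' M) k0) := by
  classical
  obtain ⟨u, v, v', e, e', hd, hd', hEl, hE'l, helt⟩ := hflt
  have heE : e ∈ E := by rw [← hEl]; exact List.mem_toFinset.mpr (by simp)
  have he'E : e' ∈ E' := by rw [← hE'l]; exact List.mem_toFinset.mpr (by simp)
  have hτ : e.2 = e'.2 := by
    rcases lt_trichotomy e.2 e'.2 with h | h | h
    · exact absurd (aux_snd_eq_false hE'.1 hE.1 hd' hd hE'l hEl h) id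
    · exact h
    · exact absurd (aux_snd_eq_false hE.1 hE'.1 hd hd' hEl hE'l h) id
  -- minimal starts are at least 1
  obtain ⟨s0, hs0A, hs0min⟩ := aux_min_start hE.1 ⟨e, heE⟩
  obtain ⟨j0, _, hj0⟩ := Finset.mem_image.mp hs0A
  have hstartE : ∀ x ∈ E, 1 ≤ x.1 := by
    intro x hx
    have := hs0min x hx
    have := h1 j0
    omega
  obtain ⟨s1, hs1A, hs1min⟩ := aux_min_start hE'.1 ⟨e', he'E⟩
  obtain ⟨j1, _, hj1⟩ := Finset.mem_image.mp hs1A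
  have hstartE' : ∀ x ∈ E', 1 ≤ x.1 := by
    intro x hx
    have := hs1min x hx
    have := h1 j1
    omega
  have he2n : e.2 ≤ n := aux_end_le hE h2 hbi j0 e heE
  have hee : e.1 < e.2 := hE.1.edge_lt e heE
  have he'e : e'.1 < e'.2 := hE'.1.edge_lt e' he'E
  have he1pos : 1 ≤ e.1 := hstartE e heE
  have he'1pos : 1 ≤ e'.1 := hstartE' e' he'E
  set M := e.2 - 1 with hM
  have he_u : e ∉ u.toFinset := fun h =>
    absurd ((aux_desc_parts hd).1 e (List.mem_toFinset.mp h)) (lt_irrefl _)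
  have he'_u : e' ∉ u.toFinset := fun h => by
    have := (aux_desc_parts hd').1 e' (List.mem_toFinset.mp h)
    exact absurd this (lt_irrefl _)
  have hs1 : E.filter (fun x => M < x.2) = insert e u.toFinset := by
    rw [← hEl]
    exact aux_filterset_lt hd (by omega)
      (fun x hx => by have := (aux_desc_parts hd).2 x hx; omega)
  have hs2 : E'.filter (fun x => M < x.2) = insert e' u.toFinset := by
    rw [← hE'l]
    exact aux_filterset_lt hd' (by omega)
      (fun x hx => by have := (aux_desc_parts hd').2 x hx; omega)
  have hkey : ∀ (F : FlowGraph) (mm s : ℤ),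
      F.filter (fun x => x.1 = s ∧ s ≤ mm ∧ mm < x.2)
        = (F.filter (fun x => mm < x.2)).filter (fun x => x.1 = s ∧ s ≤ mm) := by
    intro F mm s
    rw [Finset.filter_filter]
    exact Finset.filter_congr fun x _ =>
      ⟨fun h => ⟨h.2.2, h.1, h.2.1⟩, fun h => ⟨h.2.1, h.2.2, h.1⟩⟩
  have hform : ∀ s, nuC E M s
      = ((u.toFinset.filter (fun x => x.1 = s ∧ s ≤ M)).card : ℤ)
        + (if e.1 = s then 1 else 0) := by
    intro s
    unfold nuC
    rw [hkey, hs1, Finset.filter_insert]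
    by_cases h : e.1 = s
    · rw [if_pos ⟨h, by omega⟩,
        Finset.card_insert_of_notMem (fun hh => he_u (Finset.filter_subset _ _ hh)),
        if_pos h]
      push_cast; ring
    · rw [if_neg (fun hh => h hh.1), if_neg h]
      push_cast; ring
  have hform' : ∀ s, nuC E' M s
      = ((u.toFinset.filter (fun x => x.1 = s ∧ s ≤ M)).card : ℤ)
        + (if e'.1 = s then 1 else 0) := by
    intro s
    unfold nuC
    rw [hkey, hs2, Finset.filter_insert]
    by_cases h : e'.1 = s
    · rw [if_pos ⟨h, by omega⟩,
        Finset.card_insert_of_notMem (fun hh => he'_u (Finset.filter_subset _ _ hh)),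
        if_pos h]
      push_cast; ring
    · rw [if_neg (fun hh => h hh.1), if_neg h]
      push_cast; ring
  have hpsum : ∀ k, psumZ (nuC E M) k
      = (∑ j ∈ Finset.Icc 1 k, ((u.toFinset.filter (fun x => x.1 = j ∧ j ≤ M)).card : ℤ))
        + (if e.1 ∈ Finset.Icc 1 k then 1 else 0) := by
    intro k
    unfold psumZ
    rw [Finset.sum_congr rfl (fun j _ => hform j), Finset.sum_add_distrib]
    congr 1
    exact Finset.sum_ite_eq (Finset.Icc 1 k) e.1 (fun _ => (1 : ℤ))
  have hpsum' : ∀ k, psumZ (nuC E' M) k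
      = (∑ j ∈ Finset.Icc 1 k, ((u.toFinset.filter (fun x => x.1 = j ∧ j ≤ M)).card : ℤ))
        + (if e'.1 ∈ Finset.Icc 1 k then 1 else 0) := by
    intro k
    unfold psumZ
    rw [Finset.sum_congr rfl (fun j _ => hform' j), Finset.sum_add_distrib]
    congr 1
    exact Finset.sum_ite_eq (Finset.Icc 1 k) e'.1 (fun _ => (1 : ℤ))
  refine ⟨M, e'.1, by omega, by omega, ?_, ?_, ?_⟩
  · intro m hm s
    have hm' : e.2 ≤ m := by omega
    have hset : E.filter (fun x => m < x.2) = E'.filter (fun x => m < x.2) := by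
      rw [← hEl, ← hE'l, aux_filterset_ge hd hm', aux_filterset_ge hd' (by omega)]
    have hfe : E.filter (fun x => x.1 = s ∧ s ≤ m ∧ m < x.2)
        = E'.filter (fun x => x.1 = s ∧ s ≤ m ∧ m < x.2) := by
      rw [hkey, hkey, hset]
    unfold nuC
    rw [hfe]
  · intro k
    rw [hpsum k, hpsum' k]
    have hmem : e.1 ∈ Finset.Icc 1 k → e'.1 ∈ Finset.Icc 1 k := by
      simp only [Finset.mem_Icc]
      omega
    by_cases h : e.1 ∈ Finset.Icc 1 k
    · rw [if_pos h, if_pos (hmem h)]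
    · rw [if_neg h]
      by_cases h' : e'.1 ∈ Finset.Icc 1 k
      · rw [if_pos h']; omega
      · rw [if_neg h']
  · rw [hpsum e'.1, hpsum' e'.1,
      if_neg (by simp only [Finset.mem_Icc]; omega),
      if_pos (by simp only [Finset.mem_Icc]; omega)]
    ring

/-- Lemma 35: let `T`, `S` be regular row standard `lam`-tableaux and
`Γ ≤ Γ'` flows of `𝓕_i(a_1,…,a_q; b_1,…,b_q)` such that `σ_{Γ,i}(T)` and
`σ_{Γ',i}(S)` are well-defined and `σ_{Γ',i}(S) ≤ σ_{Γ,i}(T)`. Then `S ≤ T`,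
and moreover `S < T` if `Γ < Γ'`. -/
theorem statement15 {q : ℕ} (n i : ℤ) (a b : Fin q → ℤ)
    (ha : StrictMono a) (hb : StrictAnti b)
    (hai : ∀ j, a j ≤ i) (hbi : ∀ j, i < b j)
    (h1 : ∀ j, 1 ≤ a j) (h2 : ∀ j, b j ≤ n)
    (lam : ℤ → ℕ) (hlam : IsComposition n lam)
    (T S : ℤ → Multiset ℤ)
    (hT : IsRegularTab n lam T) (hS : IsRegularTab n lam S)
    (E E' : FlowGraph) (hE : InF i a b E) (hE' : InF i a b E')
    (hle : FlowLt E E' ∨ E = E')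
    (hdefT : SigmaDefined E T) (hdefS : SigmaDefined E' S)
    (hσ : TabLE n (sigmaTab E' i n S) (sigmaTab E i n T)) :
    TabLE n S T ∧ (FlowLt E E' → TabLT n S T) := by
  classical
  have hformT : ∀ m r, shapeVec (sigmaTab E i n T) m r
      = shapeVec T m r + nuC E m r + indZ i n m r :=
    fun m r => aux_shape E i n T hdefT hE.1.edge_lt m r
  have hformS : ∀ m r, shapeVec (sigmaTab E' i n S) m r
      = shapeVec S m r + nuC E' m r + indZ i n m r :=
    fun m r => aux_shape E' i n S hdefS hE'.1.edge_lt m r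
  have hpsumT : ∀ m k, psumZ (shapeVec (sigmaTab E i n T) m) k
      = psumZ (shapeVec T m) k + psumZ (nuC E m) k + psumZ (indZ i n m) k := by
    intro m k
    unfold psumZ
    rw [← Finset.sum_add_distrib, ← Finset.sum_add_distrib]
    exact Finset.sum_congr rfl fun j _ => hformT m j
  have hpsumS : ∀ m k, psumZ (shapeVec (sigmaTab E' i n S) m) k
      = psumZ (shapeVec S m) k + psumZ (nuC E' m) k + psumZ (indZ i n m) k := by
    intro m k
    unfold psumZ
    rw [← Finset.sum_add_distrib, ← Finset.sum_add_distrib]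
    exact Finset.sum_congr rfl fun j _ => hformS m j
  have main : FlowLt E E' → TabLT n S T := by
    intro hflt
    obtain ⟨M, k0, hM1, hMn, hnueq, hnule, hnustrict⟩ :=
      aux_key n i a b hbi h1 h2 hE hE' hflt
    have hnueqp : ∀ m, M < m → ∀ k, psumZ (nuC E m) k = psumZ (nuC E' m) k := by
      intro m hm k
      unfold psumZ
      exact Finset.sum_congr rfl fun j _ => hnueq m hm j
    rcases hσ with ⟨m₀, hm₁, hmn, hdom, hne, habove⟩ | hσeq
    · have hdomp : ∀ k, psumZ (shapeVec (sigmaTab E' i n S) m₀) k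
          ≤ psumZ (shapeVec (sigmaTab E i n T) m₀) k := hdom
      rcases le_or_gt m₀ M with hcase | hcase
      · have hσle : ∀ k, psumZ (shapeVec (sigmaTab E' i n S) M) k
            ≤ psumZ (shapeVec (sigmaTab E i n T) M) k := by
          intro k
          rcases eq_or_lt_of_le hcase with heq | hlt2
          · rw [← heq]; exact hdomp k
          · rw [habove M hlt2 hMn]
        refine ⟨M, hM1, hMn, ?_, ?_, ?_⟩
        · intro k
          have e1 := hpsumT M k
          have e2 := hpsumS M k
          have e3 := hσle k
          have e4 := hnule k
          show psumZ (shapeVec S M) k ≤ psumZ (shapeVec T M) k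
          linarith
        · intro hcontra
          have hpeq : psumZ (shapeVec S M) k0 = psumZ (shapeVec T M) k0 := by rw [hcontra]
          have e1 := hpsumT M k0
          have e2 := hpsumS M k0
          have e3 := hσle k0
          linarith [hnustrict]
        · intro m' hm' hm'n
          funext r
          have e1 := hformT m' r
          have e2 := hformS m' r
          have e3 := congrFun (habove m' (lt_of_le_of_lt hcase hm') hm'n) r
          have e4 := hnueq m' hm' r
          linarith
      · refine ⟨m₀, hm₁, hmn, ?_, ?_, ?_⟩
        · intro k
          have e1 := hpsumT m₀ k
          have e2 := hpsumS m₀ k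
          have e3 := hdomp k
          have e4 := hnueqp m₀ hcase k
          show psumZ (shapeVec S m₀) k ≤ psumZ (shapeVec T m₀) k
          linarith
        · intro hcontra
          apply hne
          funext r
          have e1 := hformT m₀ r
          have e2 := hformS m₀ r
          have e3 := congrFun hcontra r
          have e4 := hnueq m₀ hcase r
          linarith
        · intro m' hm' hm'n
          funext r
          have e1 := hformT m' r
          have e2 := hformS m' r
          have e3 := congrFun (habove m' hm' hm'n) r
          have e4 := hnueq m' (lt_trans hcase hm') r
          linarith
    · have hσeqp : ∀ m, 1 ≤ m → m ≤ n → ∀ k,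
          psumZ (shapeVec (sigmaTab E' i n S) m) k
            = psumZ (shapeVec (sigmaTab E i n T) m) k := by
        intro m hm1 hmn k
        rw [hσeq m hm1 hmn]
      refine ⟨M, hM1, hMn, ?_, ?_, ?_⟩
      · intro k
        have e1 := hpsumT M k
        have e2 := hpsumS M k
        have e3 := hσeqp M hM1 hMn k
        have e4 := hnule k
        show psumZ (shapeVec S M) k ≤ psumZ (shapeVec T M) k
        linarith
      · intro hcontra
        have hpeq : psumZ (shapeVec S M) k0 = psumZ (shapeVec T M) k0 := by rw [hcontra]
        have e1 := hpsumT M k0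
        have e2 := hpsumS M k0
        have e3 := hσeqp M hM1 hMn k0
        linarith [hnustrict]
      · intro m' hm' hm'n
        funext r
        have e1 := hformT m' r
        have e2 := hformS m' r
        have e3 := congrFun (hσeq m' (by omega) hm'n) r
        have e4 := hnueq m' hm' r
        linarith
  refine ⟨?_, main⟩
  rcases hle with hflt | heq
  · exact Or.inl (main hflt)
  · subst heq
    rcases hσ with ⟨m₀, hm₁, hmn, hdom, hne, habove⟩ | hσeq
    · left
      have hdomp : ∀ k, psumZ (shapeVec (sigmaTab E i n S) m₀) k
          ≤ psumZ (shapeVec (sigmaTab E i n T) m₀) k := hdom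
      refine ⟨m₀, hm₁, hmn, ?_, ?_, ?_⟩
      · intro k
        have e1 := hpsumT m₀ k
        have e2 := hpsumS m₀ k
        have e3 := hdomp k
        show psumZ (shapeVec S m₀) k ≤ psumZ (shapeVec T m₀) k
        linarith
      · intro hcontra
        apply hne
        funext r
        have e1 := hformT m₀ r
        have e2 := hformS m₀ r
        have e3 := congrFun hcontra r
        linarith
      · intro m' hm' hm'n
        funext r
        have e1 := hformT m' r
        have e2 := hformS m' r
        have e3 := congrFun (habove m' hm' hm'n) r
        linarith
    · right
      intro m hm1 hmn
      funext r
      have e1 := hformT m r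
      have e2 := hformS m r
      have e3 := congrFun (hσeq m hm1 hmn) r
      linarith
end

section
/- Let λ = (λ_1,…,λ_n) be a partition with λ_i > 0, let T be a standard λ-tableau whose first column has height i (i.e., the number of nonzero parts of λ relevant to the first column is i), let i_0 be the minimal element of {1,…,i} with i_0 < T(i_0, 1) (and i_0 := +∞ if there is no such element), and let Γ be the graph with vertex set ℤ whose edges are (s, T(s,1)) for s = i_0,…,i. Then Γ is a flow, all of whose sources and transit points are at most i and all of whose sinks are greater than i; and if a_1 < … < a_q are its sources and b_q < … < b_1 its sinks, then Γ is the smallest element of 𝓕_i(a_1,…,a_q; b_1,…,b_q) with respect to the linear order on flows. -/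
open Finset

/-- A row standard `lam`-tableau with entries in `{1,…,n}` is modelled by its
rows, each row being the multiset of its entries. -/
def IsTab (n : ℤ) (lam : ℤ → ℕ) (T : ℤ → Multiset ℤ) : Prop :=
  (∀ r : ℤ, (T r).card = lam r) ∧
  (∀ r : ℤ, ∀ x ∈ T r, 1 ≤ x ∧ x ≤ n)

/-- Row `r` of the tableau, sorted weakly increasingly. -/
def rowList (T : ℤ → Multiset ℤ) (r : ℤ) : List ℤ :=
  Multiset.sort (T r) (· ≤ ·)

/-- The tableau is standard: the entries strictly increase down the columns. -/
def IsStandardTab (T : ℤ → Multiset ℤ) : Prop :=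
  ∀ r : ℤ, 1 ≤ r → ∀ j : ℕ, j < (rowList T (r + 1)).length →
    j < (rowList T r).length ∧ (rowList T r).getD j 0 < (rowList T (r + 1)).getD j 0

/-- `T(r, 1)`, the first (smallest) entry of row `r`. -/
def firstCol (T : ℤ → Multiset ℤ) (r : ℤ) : ℤ := (rowList T r).headI

section Aux
variable {E : FlowGraph} {A B : Finset ℤ}

lemma ends_inj (hF : IsFlow E A B) {e g : ℤ × ℤ} (he : e ∈ E) (hg : g ∈ E)
    (h2 : e.2 = g.2) : e = g := by
  have he' : e ∈ endsAt E e.2 := Finset.mem_filter.mpr ⟨he, rfl⟩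
  have hg' : g ∈ endsAt E e.2 := Finset.mem_filter.mpr ⟨hg, h2.symm⟩
  by_cases hA : e.2 ∈ A
  · rw [hF.source_in _ hA] at he'; exact absurd he' (Finset.notMem_empty _)
  by_cases hB : e.2 ∈ B
  · obtain ⟨x, hx⟩ := Finset.card_eq_one.mp (hF.sink_in _ hB)
    rw [hx, Finset.mem_singleton] at he' hg'; rw [he', hg']
  · rcases hF.transit _ hA hB with ⟨_, h⟩ | ⟨_, h⟩
    · rw [h] at he'; exact absurd he' (Finset.notMem_empty _)
    · obtain ⟨x, hx⟩ := Finset.card_eq_one.mp h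
      rw [hx, Finset.mem_singleton] at he' hg'; rw [he', hg']

lemma starts_inj (hF : IsFlow E A B) {e g : ℤ × ℤ} (he : e ∈ E) (hg : g ∈ E)
    (h1 : e.1 = g.1) : e = g := by
  have he' : e ∈ beginsAt E e.1 := Finset.mem_filter.mpr ⟨he, rfl⟩
  have hg' : g ∈ beginsAt E e.1 := Finset.mem_filter.mpr ⟨hg, h1.symm⟩
  by_cases hB : e.1 ∈ B
  · rw [hF.sink_out _ hB] at he'; exact absurd he' (Finset.notMem_empty _)
  by_cases hA : e.1 ∈ A
  · obtain ⟨x, hx⟩ := Finset.card_eq_one.mp (hF.source_out _ hA)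
    rw [hx, Finset.mem_singleton] at he' hg'; rw [he', hg']
  · rcases hF.transit _ hA hB with ⟨h, _⟩ | ⟨h, _⟩
    · rw [h] at he'; exact absurd he' (Finset.notMem_empty _)
    · obtain ⟨x, hx⟩ := Finset.card_eq_one.mp h
      rw [hx, Finset.mem_singleton] at he' hg'; rw [he', hg']

lemma start_mem (hF : IsFlow E A B) {e : ℤ × ℤ} (he : e ∈ E) :
    e.1 ∈ A ∨ IsTransitPoint E A B e.1 := by
  by_cases hA : e.1 ∈ A
  · exact Or.inl hA
  by_cases hB : e.1 ∈ B
  · have : e ∈ beginsAt E e.1 := Finset.mem_filter.mpr ⟨he, rfl⟩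
    rw [hF.sink_out _ hB] at this; exact absurd this (Finset.notMem_empty _)
  · refine Or.inr (Finset.mem_sdiff.mpr ⟨?_, ?_⟩)
    · exact Finset.mem_union_left _ (Finset.mem_image.mpr ⟨e, he, rfl⟩)
    · simp [hA, hB]

lemma end_mem (hF : IsFlow E A B) {e : ℤ × ℤ} (he : e ∈ E) :
    e.2 ∈ B ∨ IsTransitPoint E A B e.2 := by
  by_cases hB : e.2 ∈ B
  · exact Or.inl hB
  by_cases hA : e.2 ∈ A
  · have : e ∈ endsAt E e.2 := Finset.mem_filter.mpr ⟨he, rfl⟩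
    rw [hF.source_in _ hA] at this; exact absurd this (Finset.notMem_empty _)
  · refine Or.inr (Finset.mem_sdiff.mpr ⟨?_, ?_⟩)
    · exact Finset.mem_union_right _ (Finset.mem_image.mpr ⟨e, he, rfl⟩)
    · simp [hA, hB]

lemma exists_end (hF : IsFlow E A B) (r : ℤ)
    (h : r ∈ B ∨ (r ∉ A ∧ r ∉ B ∧ (beginsAt E r).Nonempty)) : ∃ g ∈ E, g.2 = r := by
  have hcard : (endsAt E r).card = 1 := by
    rcases h with hB | ⟨hA, hB, hne⟩
    · exact hF.sink_in _ hB
    · rcases hF.transit _ hA hB with ⟨h1, _⟩ | ⟨_, h2⟩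
      · rw [h1] at hne; exact absurd hne (by simp)
      · exact h2
  obtain ⟨g, hg⟩ := Finset.card_pos.mp (by rw [hcard]; norm_num)
  exact ⟨g, (Finset.mem_filter.mp hg).1, (Finset.mem_filter.mp hg).2⟩

lemma exists_desc_list : ∀ (n : ℕ) (E : Finset (ℤ × ℤ)), E.card = n →
    (∀ e ∈ E, ∀ g ∈ E, e.2 = g.2 → e = g) →
    ∃ l : List (ℤ × ℤ), DescList l ∧ l.toFinset = E ∧ l.Nodup := by
  intro n
  induction n with
  | zero =>
    intro E hc _
    exact ⟨[], List.Pairwise.nil, by simp [Finset.card_eq_zero.mp hc], List.nodup_nil⟩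
  | succ n ih =>
    intro E hc hinj
    have hne : E.Nonempty := Finset.card_pos.mp (by omega)
    obtain ⟨e, heE, hmax⟩ := Finset.exists_max_image E (fun g => g.2) hne
    obtain ⟨l, hl1, hl2, hl3⟩ := ih (E.erase e) (by rw [Finset.card_erase_of_mem heE, hc]; rfl)
      (fun a ha b hb hab => hinj a (Finset.mem_of_mem_erase ha) b (Finset.mem_of_mem_erase hb) hab)
    have hnotin : ∀ g ∈ l, g.2 < e.2 := by
      intro g hg
      have hg' : g ∈ E.erase e := by rw [← hl2]; exact List.mem_toFinset.mpr hg
      have h1 : g ≠ e := Finset.ne_of_mem_erase hg'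
      have h2 : g.2 ≤ e.2 := hmax g (Finset.mem_of_mem_erase hg')
      rcases lt_or_eq_of_le h2 with h | h
      · exact h
      · exact absurd (hinj g (Finset.mem_of_mem_erase hg') e heE h) h1
    refine ⟨e :: l, List.pairwise_cons.mpr ⟨hnotin, hl1⟩, ?_, ?_⟩
    · rw [List.toFinset_cons, hl2, Finset.insert_erase heE]
    · refine List.nodup_cons.mpr ⟨fun hmem => ?_, hl3⟩
      have : e ∈ E.erase e := by rw [← hl2]; exact List.mem_toFinset.mpr hmem
      exact (Finset.notMem_erase e E) this

lemma exists_lcp {α : Type*} [DecidableEq α] : ∀ (l l' : List α), ∃ u v v',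
    l = u ++ v ∧ l' = u ++ v' ∧
    ∀ (e e' : α) (t t' : List α), v = e :: t → v' = e' :: t' → e ≠ e' := by
  intro l
  induction l with
  | nil =>
    intro l'
    exact ⟨[], [], l', rfl, rfl, fun e e' t t' h _ => by simp at h⟩
  | cons a t ih =>
    intro l'
    cases l' with
    | nil => exact ⟨[], a :: t, [], rfl, rfl, fun e e' te t' _ h => by simp at h⟩
    | cons a' t' =>
      by_cases haa : a = a'
      · obtain ⟨u, v, v', h1, h2, h3⟩ := ih t'
        subst haa
        exact ⟨a :: u, v, v', by rw [List.cons_append, ← h1], by rw [List.cons_append, ← h2], h3⟩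
      · refine ⟨[], a :: t, a' :: t', rfl, rfl, ?_⟩
        intro e e' te te' h1 h2
        rw [List.cons.injEq] at h1 h2
        rw [← h1.1, ← h2.1]; exact haa

end Aux

open Finset

def dAux (f : ℤ → ℤ) : ℤ → ℕ → List (ℤ × ℤ)
  | _, 0 => []
  | i, (k+1) => (i, f i) :: dAux f (i - 1) k

lemma mem_dAux (f : ℤ → ℤ) (g : ℤ × ℤ) : ∀ (k : ℕ) (i : ℤ),
    g ∈ dAux f i k ↔ (i - k < g.1 ∧ g.1 ≤ i ∧ g.2 = f g.1) := by
  intro k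
  induction k with
  | zero => intro i; simp [dAux]; omega
  | succ k ih =>
    intro i
    rw [dAux, List.mem_cons, ih (i - 1)]
    constructor
    · rintro (rfl | ⟨h1, h2, h3⟩)
      · exact ⟨by show i - ((k+1 : ℕ) : ℤ) < i; omega, le_rfl, rfl⟩
      · exact ⟨by push_cast; omega, by omega, h3⟩
    · rintro ⟨h1, h2, h3⟩
      rcases eq_or_lt_of_le h2 with heq | hlt
      · left
        rw [← heq]
        rw [Prod.ext_iff]
        exact ⟨rfl, h3⟩
      · right
        exact ⟨by push_cast at h1 ⊢; omega, by omega, h3⟩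

lemma dAux_pairwise_fst (f : ℤ → ℤ) : ∀ (k : ℕ) (i : ℤ),
    (dAux f i k).Pairwise (fun a b => b.1 < a.1) := by
  intro k
  induction k with
  | zero => intro i; exact List.Pairwise.nil
  | succ k ih =>
    intro i
    rw [dAux]
    refine List.pairwise_cons.mpr ⟨?_, ih (i - 1)⟩
    intro b hb
    have := (mem_dAux f b k (i - 1)).mp hb
    simp only
    omega

lemma dAux_pairwise_snd (f : ℤ → ℤ) : ∀ (k : ℕ) (i : ℤ),
    (∀ s t, i - k < s → s < t → t ≤ i → f s < f t) →
    (dAux f i k).Pairwise (fun a b => b.2 < a.2) := by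
  intro k
  induction k with
  | zero => intro i _; exact List.Pairwise.nil
  | succ k ih =>
    intro i hm
    rw [dAux]
    refine List.pairwise_cons.mpr ⟨?_, ih (i - 1) (fun s t h1 h2 h3 => hm s t (by push_cast at h1 ⊢; omega) h2 (by omega))⟩
    intro b hb
    obtain ⟨h1, h2, h3⟩ := (mem_dAux f b k (i - 1)).mp hb
    simp only [h3]
    exact hm b.1 i (by push_cast at h1 ⊢; omega) (by omega) le_rfl

def descL (i0 i : ℤ) (f : ℤ → ℤ) : List (ℤ × ℤ) := dAux f i (i + 1 - i0).toNat

lemma mem_descL (i0 i : ℤ) (f : ℤ → ℤ) (g : ℤ × ℤ) :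
    g ∈ descL i0 i f ↔ (i0 ≤ g.1 ∧ g.1 ≤ i ∧ g.2 = f g.1) := by
  rw [descL, mem_dAux]
  constructor
  · rintro ⟨h1, h2, h3⟩; exact ⟨by omega, h2, h3⟩
  · rintro ⟨h1, h2, h3⟩; exact ⟨by omega, h2, h3⟩

lemma descL_pairwise_fst (i0 i : ℤ) (f : ℤ → ℤ) :
    (descL i0 i f).Pairwise (fun a b => b.1 < a.1) := dAux_pairwise_fst f _ i

lemma descL_pairwise_snd (i0 i : ℤ) (f : ℤ → ℤ)
    (hmono : ∀ s t, i0 ≤ s → s < t → t ≤ i → f s < f t) :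
    (descL i0 i f).Pairwise (fun a b => b.2 < a.2) := by
  refine dAux_pairwise_snd f _ i (fun s t h1 h2 h3 => hmono s t (by omega) h2 h3)

lemma descL_nodup (i0 i : ℤ) (f : ℤ → ℤ) : (descL i0 i f).Nodup :=
  (descL_pairwise_fst i0 i f).imp (fun h => by intro heq; rw [heq] at h; exact absurd h (lt_irrefl _))

lemma descL_toFinset (i0 i : ℤ) (f : ℤ → ℤ) :
    (descL i0 i f).toFinset = (Finset.Icc i0 i).image (fun s => (s, f s)) := by
  ext g
  rw [List.mem_toFinset, mem_descL]
  simp only [Finset.mem_image, Finset.mem_Icc]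
  constructor
  · rintro ⟨h1, h2, h3⟩
    refine ⟨g.1, ⟨h1, h2⟩, ?_⟩
    rw [Prod.ext_iff]
    exact ⟨rfl, h3.symm⟩
  · rintro ⟨s, ⟨h1, h2⟩, rfl⟩
    exact ⟨h1, h2, rfl⟩
section GammaMin

lemma gamma_min (i0 i : ℤ) (f : ℤ → ℤ)
    (hlt : ∀ s, i0 ≤ s → s ≤ i → s < f s)
    (hmono : ∀ s t, i0 ≤ s → s < t → t ≤ i → f s < f t) :
    ∃ A B : Finset ℤ,
      IsFlow ((Finset.Icc i0 i).image (fun s => (s, f s))) A B ∧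
      (∀ x ∈ A, x ≤ i) ∧ (∀ y ∈ B, i < y) ∧
      (∀ r : ℤ, IsTransitPoint ((Finset.Icc i0 i).image (fun s => (s, f s))) A B r → r ≤ i) ∧
      ∀ E' : FlowGraph, IsFlow E' A B →
        (∀ r : ℤ, IsTransitPoint E' A B r → r ≤ i) →
        E' ≠ (Finset.Icc i0 i).image (fun s => (s, f s)) →
        FlowLt ((Finset.Icc i0 i).image (fun s => (s, f s))) E' := by
  set G : FlowGraph := (Finset.Icc i0 i).image (fun s => (s, f s)) with hG
  set A : Finset ℤ := Finset.Icc i0 i \ (Finset.Icc i0 i).image f with hA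
  set B : Finset ℤ := (Finset.Icc i0 i).image f \ Finset.Icc i0 i with hB
  have hinj : ∀ s t, i0 ≤ s → s ≤ i → i0 ≤ t → t ≤ i → f s = f t → s = t := by
    intro s t hs1 hs2 ht1 ht2 hst
    rcases lt_trichotomy s t with h | h | h
    · exact absurd hst (ne_of_lt (hmono s t hs1 h ht2))
    · exact h
    · exact absurd hst.symm (ne_of_lt (hmono t s ht1 h hs2))
  have hmemG : ∀ e : ℤ × ℤ, e ∈ G ↔ (i0 ≤ e.1 ∧ e.1 ≤ i ∧ e.2 = f e.1) := by
    intro e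
    rw [hG, ← descL_toFinset, List.mem_toFinset, mem_descL]
  have hmemA : ∀ x : ℤ, x ∈ A ↔ ((i0 ≤ x ∧ x ≤ i) ∧ ∀ s, i0 ≤ s → s ≤ i → f s ≠ x) := by
    intro x
    rw [hA, Finset.mem_sdiff, Finset.mem_Icc]
    constructor
    · rintro ⟨h1, h2⟩
      exact ⟨h1, fun s hs1 hs2 hs3 =>
        h2 (Finset.mem_image.mpr ⟨s, Finset.mem_Icc.mpr ⟨hs1, hs2⟩, hs3⟩)⟩
    · rintro ⟨h1, h2⟩
      refine ⟨h1, fun hmem => ?_⟩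
      obtain ⟨s, hs, hfs⟩ := Finset.mem_image.mp hmem
      exact h2 s (Finset.mem_Icc.mp hs).1 (Finset.mem_Icc.mp hs).2 hfs
  have hmemB : ∀ y : ℤ, y ∈ B ↔ ((∃ s, i0 ≤ s ∧ s ≤ i ∧ f s = y) ∧ ¬(i0 ≤ y ∧ y ≤ i)) := by
    intro y
    rw [hB, Finset.mem_sdiff, Finset.mem_Icc]
    constructor
    · rintro ⟨h1, h2⟩
      obtain ⟨s, hs, hfs⟩ := Finset.mem_image.mp h1
      exact ⟨⟨s, (Finset.mem_Icc.mp hs).1, (Finset.mem_Icc.mp hs).2, hfs⟩, h2⟩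
    · rintro ⟨⟨s, h1, h2, h3⟩, h4⟩
      exact ⟨Finset.mem_image.mpr ⟨s, Finset.mem_Icc.mpr ⟨h1, h2⟩, h3⟩, h4⟩
  have hbeg1 : ∀ r, i0 ≤ r → r ≤ i → beginsAt G r = {(r, f r)} := by
    intro r h1 h2
    ext e
    rw [beginsAt, Finset.mem_filter, Finset.mem_singleton]
    constructor
    · rintro ⟨heG, g4⟩
      obtain ⟨g1, g2, g3⟩ := (hmemG e).mp heG
      rw [Prod.ext_iff]
      exact ⟨g4, by rw [g3, g4]⟩
    · rintro rfl
      exact ⟨(hmemG _).mpr ⟨h1, h2, rfl⟩, rfl⟩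
  have hbeg2 : ∀ r, ¬(i0 ≤ r ∧ r ≤ i) → beginsAt G r = ∅ := by
    intro r hr
    rw [beginsAt, Finset.filter_eq_empty_iff]
    intro e he h1
    obtain ⟨g1, g2, _⟩ := (hmemG e).mp he
    exact hr ⟨h1 ▸ g1, h1 ▸ g2⟩
  have hend1 : ∀ s, i0 ≤ s → s ≤ i → endsAt G (f s) = {(s, f s)} := by
    intro s h1 h2
    ext e
    rw [endsAt, Finset.mem_filter, Finset.mem_singleton]
    constructor
    · rintro ⟨heG, h4⟩
      obtain ⟨g1, g2, g3⟩ := (hmemG e).mp heG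
      have he1 : e.1 = s := hinj _ _ g1 g2 h1 h2 (by rw [← g3, h4])
      rw [Prod.ext_iff]
      exact ⟨he1, h4⟩
    · rintro rfl
      exact ⟨(hmemG _).mpr ⟨h1, h2, rfl⟩, rfl⟩
  have hend2 : ∀ r, (∀ s, i0 ≤ s → s ≤ i → f s ≠ r) → endsAt G r = ∅ := by
    intro r hr
    rw [endsAt, Finset.filter_eq_empty_iff]
    intro e he h2
    obtain ⟨g1, g2, g3⟩ := (hmemG e).mp he
    exact hr e.1 g1 g2 (by rw [← g3, h2])
  have hFlow : IsFlow G A B := by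
    constructor
    · intro e he
      obtain ⟨g1, g2, g3⟩ := (hmemG e).mp he
      rw [g3]
      exact hlt _ g1 g2
    · rw [Finset.disjoint_left]
      intro x hx hx'
      obtain ⟨⟨s, hs1, hs2, hs3⟩, _⟩ := (hmemB x).mp hx'
      exact ((hmemA x).mp hx).2 s hs1 hs2 hs3
    · intro a ha
      obtain ⟨⟨h1, h2⟩, _⟩ := (hmemA a).mp ha
      rw [hbeg1 a h1 h2]
      exact Finset.card_singleton _
    · intro a ha
      exact hend2 a ((hmemA a).mp ha).2
    · intro b hb
      obtain ⟨⟨s, h1, h2, h3⟩, _⟩ := (hmemB b).mp hb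
      rw [← h3, hend1 s h1 h2]
      exact Finset.card_singleton _
    · intro b hb
      exact hbeg2 b ((hmemB b).mp hb).2
    · intro r hrA hrB
      by_cases hr : i0 ≤ r ∧ r ≤ i
      · right
        have himg : ∃ s, i0 ≤ s ∧ s ≤ i ∧ f s = r := by
          by_contra hno
          push_neg at hno
          exact hrA ((hmemA r).mpr ⟨hr, fun s h1 h2 => hno s h1 h2⟩)
        obtain ⟨s, h1, h2, h3⟩ := himg
        rw [hbeg1 r hr.1 hr.2, ← h3, hend1 s h1 h2]
        exact ⟨Finset.card_singleton _, Finset.card_singleton _⟩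
      · left
        have himg : ∀ s, i0 ≤ s → s ≤ i → f s ≠ r := by
          intro s h1 h2 h3
          exact hrB ((hmemB r).mpr ⟨⟨s, h1, h2, h3⟩, hr⟩)
        exact ⟨hbeg2 r hr, hend2 r himg⟩
  have hAle : ∀ x ∈ A, x ≤ i := fun x hx => ((hmemA x).mp hx).1.2
  have hBgt : ∀ y ∈ B, i < y := by
    intro y hy
    obtain ⟨⟨s, h1, h2, h3⟩, h4⟩ := (hmemB y).mp hy
    have h5 := hlt s h1 h2
    push_neg at h4
    exact h4 (by omega)
  have hGtr : ∀ r, IsTransitPoint G A B r → r ≤ i := by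
    intro r hr
    obtain ⟨hr1, hr2⟩ := Finset.mem_sdiff.mp hr
    rw [Finset.mem_union] at hr1
    rcases hr1 with h | h
    · obtain ⟨e, he, hh⟩ := Finset.mem_image.mp h
      obtain ⟨g1, g2, _⟩ := (hmemG e).mp he
      omega
    · obtain ⟨e, he, hh⟩ := Finset.mem_image.mp h
      obtain ⟨g1, g2, g3⟩ := (hmemG e).mp he
      by_contra hri
      push_neg at hri
      have hrB : r ∈ B := (hmemB r).mpr ⟨⟨e.1, g1, g2, by rw [← g3, hh]⟩, by omega⟩
      exact hr2 (Finset.mem_union_right _ hrB)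
  refine ⟨A, B, hFlow, hAle, hBgt, hGtr, ?_⟩
  intro E' hF' htr' hne
  have hinj2 : ∀ e ∈ E', ∀ g ∈ E', e.2 = g.2 → e = g :=
    fun e he g hg h => ends_inj hF' he hg h
  obtain ⟨L', hL'desc, hL'fin, hL'nd⟩ := exists_desc_list E'.card E' rfl hinj2
  have hLdesc : DescList (descL i0 i f) := descL_pairwise_snd i0 i f hmono
  have hLfin : (descL i0 i f).toFinset = G := by rw [descL_toFinset, hG]
  have hLfst : (descL i0 i f).Pairwise (fun a b => b.1 < a.1) := descL_pairwise_fst i0 i f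
  have hmemL : ∀ g, g ∈ descL i0 i f ↔ (i0 ≤ g.1 ∧ g.1 ≤ i ∧ g.2 = f g.1) := mem_descL i0 i f
  obtain ⟨u, v, v', hLu, hL'u, hdiff⟩ := exists_lcp (descL i0 i f) L'
  have husubL : ∀ g ∈ u, g ∈ descL i0 i f := fun g hg => hLu ▸ List.mem_append_left _ hg
  have husubL' : ∀ g ∈ u, g ∈ L' := fun g hg => hL'u ▸ List.mem_append_left _ hg
  have hE'mem : ∀ g, g ∈ L' → g ∈ E' := fun g hg => hL'fin ▸ List.mem_toFinset.mpr hg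
  cases v with
  | nil =>
    have hLu' : descL i0 i f = u := by simpa using hLu
    cases v' with
    | nil =>
      exfalso
      apply hne
      have hLL : L' = descL i0 i f := by rw [hL'u, hLu']; simp
      rw [← hL'fin, hLL, hLfin]
    | cons g0 v't =>
      exfalso
      have hgv' : (g0 :: v't).getLast (List.cons_ne_nil g0 v't) ∈ g0 :: v't :=
        List.getLast_mem _
      set g := (g0 :: v't).getLast (List.cons_ne_nil g0 v't) with hgdef
      have hgL' : g ∈ L' := hL'u ▸ List.mem_append_right _ hgv'
      have hgE' : g ∈ E' := hE'mem _ hgL'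
      have hminend : ∀ h ∈ E', h ≠ g → g.2 < h.2 := by
        intro h hh hne2
        have hhL' : h ∈ L' := by rw [← List.mem_toFinset, hL'fin]; exact hh
        rw [hL'u] at hhL'
        have hpw : (u ++ g0 :: v't).Pairwise (fun a b => b.2 < a.2) := hL'u ▸ hL'desc
        obtain ⟨hpu, hpv, hpuv⟩ := List.pairwise_append.mp hpw
        rcases List.mem_append.mp hhL' with hu1 | hv1
        · exact hpuv h hu1 g hgv'
        · have hsplit : g0 :: v't = (g0 :: v't).dropLast ++ [g] :=
            (List.dropLast_append_getLast (List.cons_ne_nil g0 v't)).symm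
          rw [hsplit] at hv1 hpv
          rcases List.mem_append.mp hv1 with h1 | h1
          · obtain ⟨_, _, hfin⟩ := List.pairwise_append.mp hpv
            exact hfin h h1 g (List.mem_singleton_self g)
          · exact absurd (List.mem_singleton.mp h1) hne2
      have hg1B : g.1 ∉ B := by
        intro hB1
        have hmm : g ∈ beginsAt E' g.1 := Finset.mem_filter.mpr ⟨hgE', rfl⟩
        rw [hF'.sink_out _ hB1] at hmm
        exact absurd hmm (Finset.notMem_empty _)
      have hg1A : g.1 ∈ A := by
        by_contra hA1
        obtain ⟨h, hh, hh2⟩ := exists_end hF' g.1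
          (Or.inr ⟨hA1, hg1B, ⟨g, Finset.mem_filter.mpr ⟨hgE', rfl⟩⟩⟩)
        have hlt2 := hF'.edge_lt g hgE'
        have hne2 : h ≠ g := by
          intro he0
          rw [he0] at hh2
          omega
        have := hminend h hh hne2
        omega
      obtain ⟨⟨ha1, ha2⟩, _⟩ := (hmemA g.1).mp hg1A
      have hgL : (g.1, f g.1) ∈ descL i0 i f := (hmemL _).mpr ⟨ha1, ha2, rfl⟩
      have hgu2 : (g.1, f g.1) ∈ u := hLu' ▸ hgL
      have hginE' : (g.1, f g.1) ∈ E' := hE'mem _ (husubL' _ hgu2)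
      have hgeq : g = (g.1, f g.1) := starts_inj hF' hgE' hginE' rfl
      have hgu : g ∈ u := by rw [hgeq]; exact hgu2
      have hnd : (u ++ g0 :: v't).Nodup := hL'u ▸ hL'nd
      rw [List.nodup_append] at hnd
      exact hnd.2.2 _ hgu _ hgv' rfl
  | cons e vt =>
    have heL : e ∈ descL i0 i f := hLu ▸ List.mem_append_right _ (List.mem_cons_self (a := e) (l := vt))
    obtain ⟨he1, he2, he3⟩ := (hmemL e).mp heL
    cases v' with
    | nil =>
      exfalso
      have hi0A : i0 ∈ A := (hmemA i0).mpr
        ⟨⟨le_refl i0, by omega⟩, fun s h1 h2 h3 => by have := hlt s h1 h2; omega⟩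
      have hcard := hF'.source_out i0 hi0A
      have hnonemp : (beginsAt E' i0).Nonempty := Finset.card_pos.mp (by rw [hcard]; norm_num)
      obtain ⟨g, hg⟩ := hnonemp
      obtain ⟨hgE', hg1⟩ := Finset.mem_filter.mp hg
      have hgL' : g ∈ L' := by rw [← List.mem_toFinset, hL'fin]; exact hgE'
      have hgu : g ∈ u := by
        rw [hL'u] at hgL'
        simpa using hgL'
      have hpf : (u ++ e :: vt).Pairwise (fun a b => b.1 < a.1) := hLu ▸ hLfst
      obtain ⟨_, _, hcross⟩ := List.pairwise_append.mp hpf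
      have := hcross g hgu e (List.mem_cons_self (a := e) (l := vt))
      omega
    | cons e' v't =>
      have hee' : e ≠ e' := hdiff e e' vt v't rfl rfl
      have he'L' : e' ∈ L' := hL'u ▸ List.mem_append_right _ (List.mem_cons_self (a := e') (l := v't))
      have he'E' : e' ∈ E' := hE'mem _ he'L'
      have he'nu : e' ∉ u := by
        have hnd : (u ++ e' :: v't).Nodup := hL'u ▸ hL'nd
        rw [List.nodup_append] at hnd
        intro hu1
        exact hnd.2.2 _ hu1 _ (List.mem_cons_self (a := e') (l := v't)) rfl
      have hpfL : (u ++ e :: vt).Pairwise (fun a b => b.1 < a.1) := hLu ▸ hLfst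
      obtain ⟨_, hpfv, hpfcross⟩ := List.pairwise_append.mp hpfL
      have hpsL' : (u ++ e' :: v't).Pairwise (fun a b => b.2 < a.2) := hL'u ▸ hL'desc
      obtain ⟨_, hpsv', hpscross⟩ := List.pairwise_append.mp hpsL'
      have hurev : ∀ x : ℤ, e.1 < x → x ≤ i → (x, f x) ∈ u := by
        intro x hx1 hx2
        have hxL : (x, f x) ∈ descL i0 i f := (hmemL _).mpr ⟨by omega, hx2, rfl⟩
        rw [hLu] at hxL
        rcases List.mem_append.mp hxL with h | h
        · exact h
        · exfalso
          rcases List.mem_cons.mp h with h1 | h1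
          · have hxx : x = e.1 := congrArg Prod.fst h1
            omega
          · have := (List.pairwise_cons.mp hpfv).1 (x, f x) h1
            simp only at this
            omega
      have husnd : ∀ g ∈ u, e'.2 < g.2 :=
        fun g hg => hpscross g hg e' (List.mem_cons_self (a := e') (l := v't))
      have hs'le : e'.1 ≤ i := by
        rcases start_mem hF' he'E' with h | h
        · exact hAle _ h
        · exact htr' _ h
      have hs'le2 : e'.1 ≤ e.1 := by
        by_contra hgt
        push_neg at hgt
        have hmemu := hurev e'.1 hgt hs'le
        have heq2 : e' = (e'.1, f e'.1) := starts_inj hF' he'E' (hE'mem _ (husubL' _ hmemu)) rfl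
        rw [← heq2] at hmemu
        exact he'nu hmemu
      rcases lt_or_eq_of_le hs'le2 with hlt2 | heq
      · refine ⟨u, vt, v't, e, e', ?_, ?_, ?_, ?_, hlt2⟩
        · rw [← hLu]; exact hLdesc
        · rw [← hL'u]; exact hL'desc
        · rw [← hLu]; exact hLfin
        · rw [← hL'u]; exact hL'fin
      · exfalso
        have ht'ne : e'.2 ≠ f e.1 := by
          intro h
          apply hee'
          rw [Prod.ext_iff]
          exact ⟨heq.symm, by rw [he3, ← h]⟩
        have hwgt : e.1 < f e.1 := hlt e.1 he1 he2
        have hexw : ∃ h ∈ E', h.2 = f e.1 := by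
          by_cases hwle : f e.1 ≤ i
          · have hwu : (f e.1, f (f e.1)) ∈ u := hurev _ hwgt hwle
            have hwE' : (f e.1, f (f e.1)) ∈ E' := hE'mem _ (husubL' _ hwu)
            refine exists_end hF' (f e.1)
              (Or.inr ⟨?_, ?_, ⟨_, Finset.mem_filter.mpr ⟨hwE', rfl⟩⟩⟩)
            · intro hA1
              exact ((hmemA _).mp hA1).2 e.1 he1 he2 rfl
            · intro hB1
              have := hBgt _ hB1
              omega
          · exact exists_end hF' (f e.1)
              (Or.inl ((hmemB _).mpr ⟨⟨e.1, he1, he2, rfl⟩, by omega⟩))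
        obtain ⟨h, hhE', hh2⟩ := hexw
        have hhL' : h ∈ L' := by rw [← List.mem_toFinset, hL'fin]; exact hhE'
        rw [hL'u] at hhL'
        have hwlt' : f e.1 < e'.2 := by
          rcases List.mem_append.mp hhL' with hu1 | hv1
          · exfalso
            obtain ⟨hh1, hh1b, hh3⟩ := (hmemL h).mp (husubL _ hu1)
            have hfst := hpfcross h hu1 e (List.mem_cons_self (a := e) (l := vt))
            have hcontra : f e.1 < f h.1 := hmono e.1 h.1 he1 hfst hh1b
            rw [← hh3, hh2] at hcontra
            exact lt_irrefl _ hcontra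
          · rcases List.mem_cons.mp hv1 with h1 | h1
            · exact absurd (by rw [← h1]; exact hh2) ht'ne
            · have := (List.pairwise_cons.mp hpsv').1 h h1
              omega
        have himg : ∀ s0, i0 ≤ s0 → s0 ≤ i → f s0 = e'.2 → False := by
          intro s0 h1 h2 h3
          rcases lt_trichotomy s0 e.1 with hc | hc | hc
          · have := hmono s0 e.1 h1 hc he2
            omega
          · rw [hc] at h3
            exact ht'ne h3.symm
          · have hu0 := hurev s0 hc h2
            have := husnd _ hu0
            simp only at this
            omega
        rcases end_mem hF' he'E' with hB1 | htr1
        · obtain ⟨⟨s0, h1, h2, h3⟩, _⟩ := (hmemB _).mp hB1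
          exact himg s0 h1 h2 h3
        · have ht'le : e'.2 ≤ i := htr' _ htr1
          have ht'A : e'.2 ∉ A := by
            intro hA1
            have hmm : e' ∈ endsAt E' e'.2 := Finset.mem_filter.mpr ⟨he'E', rfl⟩
            rw [hF'.source_in _ hA1] at hmm
            exact absurd hmm (Finset.notMem_empty _)
          have hicc : i0 ≤ e'.2 := by omega
          have hex0 : ∃ s0, i0 ≤ s0 ∧ s0 ≤ i ∧ f s0 = e'.2 := by
            by_contra hno
            push_neg at hno
            exact ht'A ((hmemA _).mpr ⟨⟨hicc, ht'le⟩, fun s hq1 hq2 => hno s hq1 hq2⟩)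
          obtain ⟨s0, h1, h2, h3⟩ := hex0
          exact himg s0 h1 h2 h3

end GammaMin

/-- From the proof of Lemma 37: let `T` be a standard `lam`-tableau whose first
column has height `i`, let `i₀` be minimal in `{1,…,i}` with `i₀ < T(i₀,1)`
(and `i₀ = i + 1`, playing the role of `+∞`, if there is none), and let `Γ` be
the graph with edges `(s, T(s,1))` for `s = i₀,…,i`. Then `Γ` is a flow, its
sources and transit points are at most `i`, its sinks exceed `i`, and `Γ` is
the smallest element of `𝓕_i(a_1,…,a_q; b_1,…,b_q)`, where the `a`'s are its
sources and the `b`'s its sinks. -/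
theorem statement18 (n i : ℤ) (lam : ℤ → ℕ) (T : ℤ → Multiset ℤ)
    (hi1 : 1 ≤ i) (hin : i ≤ n)
    (hcomp : IsComposition n lam)
    (hpart : ∀ j k : ℤ, 1 ≤ j → j ≤ k → lam k ≤ lam j)
    (hheight : ∀ j : ℤ, 1 ≤ j → (0 < lam j ↔ j ≤ i))
    (hT : IsTab n lam T) (hstd : IsStandardTab T)
    (i0 : ℤ)
    (hi0 : (1 ≤ i0 ∧ i0 ≤ i ∧ i0 < firstCol T i0 ∧
              ∀ s : ℤ, 1 ≤ s → s < i0 → ¬ s < firstCol T s)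
         ∨ (i0 = i + 1 ∧ ∀ s : ℤ, 1 ≤ s → s ≤ i → ¬ s < firstCol T s)) :
    ∃ A B : Finset ℤ,
      IsFlow ((Finset.Icc i0 i).image (fun s => (s, firstCol T s))) A B ∧
      (∀ x ∈ A, x ≤ i) ∧ (∀ y ∈ B, i < y) ∧
      (∀ r : ℤ, IsTransitPoint ((Finset.Icc i0 i).image (fun s => (s, firstCol T s))) A B r
        → r ≤ i) ∧
      ∀ E' : FlowGraph, IsFlow E' A B →
        (∀ r : ℤ, IsTransitPoint E' A B r → r ≤ i) →
        E' ≠ (Finset.Icc i0 i).image (fun s => (s, firstCol T s)) →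
        FlowLt ((Finset.Icc i0 i).image (fun s => (s, firstCol T s))) E' := by
  have hcons : ∀ s : ℤ, 1 ≤ s → s + 1 ≤ i → firstCol T s < firstCol T (s + 1) := by
    intro s hs hsi
    have hlen : 0 < (rowList T (s + 1)).length := by
      rw [rowList, Multiset.length_sort, hT.1 (s + 1)]
      exact (hheight (s + 1) (by omega)).mpr hsi
    obtain ⟨h1, h2⟩ := hstd s hs 0 hlen
    have hh : ∀ l : List ℤ, l.headI = l.getD 0 0 := by
      intro l; cases l <;> rfl
    rw [firstCol, firstCol, hh, hh]
    exact h2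
  rcases hi0 with ⟨h1, h2, h3, _⟩ | ⟨h0, _⟩
  · have hmono : ∀ s t, i0 ≤ s → s < t → t ≤ i → firstCol T s < firstCol T t := by
      intro s t hs hst hti
      have H : ∀ t : ℤ, s + 1 ≤ t → t ≤ i → firstCol T s < firstCol T t :=
        Int.le_induction (fun h => hcons s (by omega) h)
          (fun t ht ih h => lt_trans (ih (by omega)) (hcons t (by omega) h))
      exact H t (by omega) hti
    have hltf : ∀ s, i0 ≤ s → s ≤ i → s < firstCol T s :=
      Int.le_induction (fun _ => h3)
        (fun s hs ih hsi => by
          have ha := ih (by omega)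
          have hb := hcons s (by omega) hsi
          omega)
    exact gamma_min i0 i (firstCol T) hltf hmono
  · subst h0
    exact gamma_min (i + 1) i (firstCol T) (fun s hs1 hs2 => by omega)
      (fun s t hs1 hs2 hs3 => by omega)
end

section
/- Let λ be a composition of length n, let X be a nonempty set of regular row standard λ-tableaux with T a minimal element of X (with respect to the tableau order), let 1 ≤ a_1 < … < a_q ≤ i < b_q < … < b_1 ≤ n, let Γ be the smallest element of 𝓕_i(a_1,…,a_q; b_1,…,b_q), and suppose σ_{Γ,i}(T) is well-defined. Then for every Γ' ∈ 𝓕_i(a_1,…,a_q; b_1,…,b_q) and every S ∈ X such that σ_{Γ',i}(S) is well-defined and (Γ', S) ≠ (Γ, T), one has σ_{Γ',i}(S) ≰ σ_{Γ,i}(T) in the tableau order. In particular, in the formal sum Σ over such pairs (Γ', S) of the tableaux σ_{Γ',i}(S), the tableau σ_{Γ,i}(T) occurs exactly once (for the pair (Γ, T)) and is a minimal element of the set of all tableaux occurring. -/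
open Finset

section Aux

lemma desc_tail {w : ℤ×ℤ} {l : List (ℤ×ℤ)} (h : DescList (w :: l)) : DescList l :=
  (List.pairwise_cons.mp h).2

lemma desc_head_gt {w : ℤ×ℤ} {l : List (ℤ×ℤ)} (h : DescList (w :: l)) :
    ∀ p ∈ l, p.2 < w.2 := fun p hp => (List.pairwise_cons.mp h).1 p hp

lemma desc_ends_inj {l : List (ℤ×ℤ)} (h : DescList l) :
    ∀ p ∈ l, ∀ q ∈ l, p.2 = q.2 → p = q := by
  induction l with
  | nil => simp
  | cons a t ih =>
    intro p hp q hq hpq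
    rcases List.mem_cons.mp hp with rfl | hp' <;> rcases List.mem_cons.mp hq with rfl | hq'
    · rfl
    · exact absurd hpq (by have := desc_head_gt h q hq'; omega)
    · exact absurd hpq (by have := desc_head_gt h p hp'; omega)
    · exact ih (desc_tail h) p hp' q hq' hpq

lemma flowlt_step (M : ℤ) :
    ∀ (u : List (ℤ×ℤ)) (E E' : FlowGraph) (e e' : ℤ×ℤ) (v v' : List (ℤ×ℤ)),
      DescList (u ++ e :: v) → DescList (u ++ e' :: v') →
      (u ++ e :: v).toFinset = E → (u ++ e' :: v').toFinset = E' →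
      e'.1 < e.1 →
      (∀ p : ℤ×ℤ, M + 1 < p.2 → (p ∈ E ↔ p ∈ E')) →
      ∀ x x' : ℤ, (x, M+1) ∈ E → (x', M+1) ∈ E' → x ≠ x' → x' < x := by
  intro u
  induction u with
  | nil =>
    intro E E' e e' v v' hd hd' hf hf' hee H x x' hx hx' hxx
    simp only [List.nil_append] at hd hd' hf hf'
    subst hf hf'
    have memE : ∀ p : ℤ×ℤ, p ∈ (e :: v).toFinset ↔ p = e ∨ p ∈ v := by
      intro p; simp [List.mem_toFinset]
    have memE' : ∀ p : ℤ×ℤ, p ∈ (e' :: v').toFinset ↔ p = e' ∨ p ∈ v' := by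
      intro p; simp [List.mem_toFinset]
    have hvend := desc_head_gt hd
    have hvend' := desc_head_gt hd'
    have he2 : M + 1 ≤ e.2 := by
      rcases (memE _).mp hx with h | h
      · rw [← h]
      · have := hvend _ h; simp at this; omega
    have he2' : M + 1 ≤ e'.2 := by
      rcases (memE' _).mp hx' with h | h
      · rw [← h]
      · have := hvend' _ h; simp at this; omega
    have hne : e ≠ e' := fun h => by rw [h] at hee; omega
    have ce : e.2 = M + 1 := by
      by_contra hc
      have h1 : M + 1 < e.2 := by omega
      have heE' : e ∈ (e' :: v').toFinset := (H e h1).mp ((memE _).mpr (Or.inl rfl))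
      rcases (memE' _).mp heE' with h | h
      · exact hne h
      · have h2 : e.2 < e'.2 := hvend' _ h
        have h3 : M + 1 < e'.2 := by omega
        have he'E : e' ∈ (e :: v).toFinset := (H e' h3).mpr ((memE' _).mpr (Or.inl rfl))
        rcases (memE _).mp he'E with h4 | h4
        · exact hne h4.symm
        · have := hvend _ h4; omega
    have ce' : e'.2 = M + 1 := by
      by_contra hc
      have h1 : M + 1 < e'.2 := by omega
      have he'E : e' ∈ (e :: v).toFinset := (H e' h1).mpr ((memE' _).mpr (Or.inl rfl))
      rcases (memE _).mp he'E with h4 | h4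
      · exact hne h4.symm
      · have := hvend _ h4; omega
    have hxe : (x, M+1) = e := by
      rcases (memE _).mp hx with h | h
      · exact h
      · have := hvend _ h; simp at this; omega
    have hxe' : (x', M+1) = e' := by
      rcases (memE' _).mp hx' with h | h
      · exact h
      · have := hvend' _ h; simp at this; omega
    have : x = e.1 := by rw [← hxe]
    have : x' = e'.1 := by rw [← hxe']
    omega
  | cons w u ih =>
    intro E E' e e' v v' hd hd' hf hf' hee H x x' hx hx' hxx
    simp only [List.cons_append] at hd hd' hf hf'
    have hwE : w ∈ E := by rw [← hf]; simp
    have hwE' : w ∈ E' := by rw [← hf']; simp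
    have hw1 : w ∉ (u ++ e :: v) := by
      intro hmem
      have := desc_head_gt hd w hmem; omega
    have hw1' : w ∉ (u ++ e' :: v') := by
      intro hmem
      have := desc_head_gt hd' w hmem; omega
    have hwx : w ≠ (x, M+1) := by
      intro hwx
      have h1 : (x, M+1) ∈ (w :: (u ++ e' :: v')) := by rw [← hwx]; exact List.mem_cons_self
      have h2 : (x', M+1) ∈ (w :: (u ++ e' :: v')) := by
        rw [← hf'] at hx'; exact List.mem_toFinset.mp hx'
      have := desc_ends_inj hd' _ h1 _ h2 rfl
      exact hxx (by simpa using congrArg Prod.fst this)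
    have hwx' : w ≠ (x', M+1) := by
      intro hwx
      have h1 : (x', M+1) ∈ (w :: (u ++ e :: v)) := by rw [← hwx]; exact List.mem_cons_self
      have h2 : (x, M+1) ∈ (w :: (u ++ e :: v)) := by
        rw [← hf] at hx; exact List.mem_toFinset.mp hx
      have := desc_ends_inj hd _ h2 _ h1 rfl
      exact hxx (by simpa using congrArg Prod.fst this)
    have hfe : (u ++ e :: v).toFinset = E.erase w := by
      rw [← hf]
      simp only [List.toFinset_cons]
      rw [Finset.erase_insert (by rw [List.mem_toFinset]; exact hw1)]
    have hfe' : (u ++ e' :: v').toFinset = E'.erase w := by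
      rw [← hf']
      simp only [List.toFinset_cons]
      rw [Finset.erase_insert (by rw [List.mem_toFinset]; exact hw1')]
    refine ih (E.erase w) (E'.erase w) e e' v v' (desc_tail hd) (desc_tail hd') hfe hfe' hee
      ?_ x x' ?_ ?_ hxx
    · intro p hp
      simp only [Finset.mem_erase]
      exact and_congr_right fun _ => H p hp
    · exact Finset.mem_erase.mpr ⟨Ne.symm hwx, hx⟩
    · exact Finset.mem_erase.mpr ⟨Ne.symm hwx', hx'⟩

end Aux
section Nu

lemma pair_card (E : FlowGraph) (s t : ℤ) :
    (E.filter (fun e => e.1 = s ∧ e.2 = t)).card = if (s, t) ∈ E then 1 else 0 := by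
  have h : E.filter (fun e => e.1 = s ∧ e.2 = t) = E.filter (· = (s, t)) := by
    apply Finset.filter_congr
    intro e _
    constructor
    · rintro ⟨h1, h2⟩; exact Prod.ext h1 h2
    · rintro rfl; exact ⟨rfl, rfl⟩
  rw [h, Finset.filter_eq']
  split <;> simp

lemma nu_rec {E : FlowGraph} (hlt : ∀ e ∈ E, e.1 < e.2) (m s : ℤ) :
    nuC E m s + ((E.filter (fun e => s = m + 1 ∧ e.1 = s)).card : ℤ)
      = nuC E (m+1) s + ((E.filter (fun e => e.1 = s ∧ e.2 = m + 1)).card : ℤ) := by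
  unfold nuC
  rw [Finset.card_filter, Finset.card_filter, Finset.card_filter, Finset.card_filter]
  push_cast
  rw [← Finset.sum_add_distrib, ← Finset.sum_add_distrib]
  apply Finset.sum_congr rfl
  intro e he
  have := hlt e he
  split_ifs <;> omega

lemma pair_iff_of_nu_eq {E E' : FlowGraph}
    (hlt : ∀ e ∈ E, e.1 < e.2) (hlt' : ∀ e ∈ E', e.1 < e.2) (m : ℤ)
    (h0 : ∀ s, nuC E m s = nuC E' m s)
    (h1 : ∀ s, nuC E (m+1) s = nuC E' (m+1) s)
    (s : ℤ) : ((s, m+1) ∈ E ↔ (s, m+1) ∈ E') := by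
  by_cases hs : s = m + 1
  · constructor <;> intro h
    · exact absurd (hlt _ h) (by simp [hs])
    · exact absurd (hlt' _ h) (by simp [hs])
  · have hE := nu_rec hlt m s
    have hE' := nu_rec hlt' m s
    have hout : E.filter (fun e => s = m + 1 ∧ e.1 = s) = ∅ :=
      Finset.filter_false_of_mem (fun e _ h => hs h.1)
    have hout' : E'.filter (fun e => s = m + 1 ∧ e.1 = s) = ∅ :=
      Finset.filter_false_of_mem (fun e _ h => hs h.1)
    rw [hout] at hE
    rw [hout'] at hE'
    have h2 := h0 s
    have h3 := h1 s
    have hc : ((E.filter (fun e => e.1 = s ∧ e.2 = m + 1)).card : ℤ)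
        = ((E'.filter (fun e => e.1 = s ∧ e.2 = m + 1)).card : ℤ) := by omega
    rw [pair_card, pair_card] at hc
    split_ifs at hc with hA hB hB
    · exact ⟨fun _ => hB, fun _ => hA⟩
    · omega
    · omega
    · exact ⟨fun h => absurd h hA, fun h => absurd h hB⟩

lemma flow_eq_of_nu_eq {E E' : FlowGraph}
    (hlt : ∀ e ∈ E, e.1 < e.2) (hlt' : ∀ e ∈ E', e.1 < e.2)
    (h : ∀ m s, nuC E m s = nuC E' m s) : E = E' := by
  ext e
  have := pair_iff_of_nu_eq hlt hlt' (e.2 - 1) (h _) (h _) e.1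
  rw [sub_add_cancel] at this
  simpa using this

lemma indeg_le_one {E : FlowGraph} {A B : Finset ℤ} (h : IsFlow E A B) (r : ℤ) :
    (endsAt E r).card ≤ 1 := by
  by_cases hA : r ∈ A
  · simp [h.source_in r hA]
  by_cases hB : r ∈ B
  · exact le_of_eq (h.sink_in r hB)
  rcases h.transit r hA hB with ⟨_, h2⟩ | ⟨_, h2⟩ <;> simp [h2]

lemma outdeg_le_one {E : FlowGraph} {A B : Finset ℤ} (h : IsFlow E A B) (r : ℤ) :
    (beginsAt E r).card ≤ 1 := by
  by_cases hA : r ∈ A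
  · exact le_of_eq (h.source_out r hA)
  by_cases hB : r ∈ B
  · simp [h.sink_out r hB]
  rcases h.transit r hA hB with ⟨h2, _⟩ | ⟨h2, _⟩ <;> simp [h2]

lemma ends_transfer {F F' : FlowGraph} {A B : Finset ℤ}
    (hF : IsFlow F A B) (hF' : IsFlow F' A B) (r : ℤ)
    (hbeg : beginsAt F r = beginsAt F' r) {y : ℤ} (hy : (y, r) ∈ F) :
    (endsAt F' r).Nonempty := by
  have hyE : (y, r) ∈ endsAt F r := by simp [endsAt, hy]
  by_cases hA : r ∈ A
  · rw [hF.source_in r hA] at hyE; simp at hyE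
  by_cases hB : r ∈ B
  · apply Finset.card_pos.mp
    rw [hF'.sink_in r hB]; norm_num
  rcases hF.transit r hA hB with ⟨_, h2⟩ | ⟨h1, _⟩
  · rw [h2] at hyE; simp at hyE
  · have hb' : (beginsAt F' r).card = 1 := by rw [← hbeg]; exact h1
    rcases hF'.transit r hA hB with ⟨h3, _⟩ | ⟨_, h4⟩
    · rw [h3] at hb'; simp at hb'
    · apply Finset.card_pos.mp; omega

lemma core_lemma {E E' : FlowGraph} {A B : Finset ℤ}
    (hE : IsFlow E A B) (hE' : IsFlow E' A B) (M : ℤ)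
    (hgt : ∀ m, M < m → ∀ s, nuC E m s = nuC E' m s)
    (hne : ∃ s, nuC E M s ≠ nuC E' M s)
    (hflt : FlowLt E E') :
    ∃ x x', (x, M+1) ∈ E ∧ (x', M+1) ∈ E' ∧ x' < x ∧
      ∀ s, nuC E M s - nuC E' M s =
        (if s = x then 1 else 0) - (if s = x' then 1 else 0) := by
  have hlt := hE.edge_lt
  have hlt' := hE'.edge_lt
  have pairIff : ∀ p : ℤ×ℤ, M + 1 < p.2 → (p ∈ E ↔ p ∈ E') := by
    intro p hp
    have h := pair_iff_of_nu_eq hlt hlt' (p.2 - 1)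
      (hgt _ (by omega)) (hgt _ (by omega)) p.1
    rw [sub_add_cancel] at h
    simpa using h
  have hbeg : beginsAt E (M+1) = beginsAt E' (M+1) := by
    ext e
    simp only [beginsAt, Finset.mem_filter]
    constructor
    · rintro ⟨heE, h1⟩
      have h2 : M + 1 < e.2 := by have := hlt e heE; omega
      exact ⟨(pairIff e h2).mp heE, h1⟩
    · rintro ⟨heE, h1⟩
      have h2 : M + 1 < e.2 := by have := hlt' e heE; omega
      exact ⟨(pairIff e h2).mpr heE, h1⟩
  have key : ∀ s, nuC E M s - nuC E' M s
      = ((E.filter (fun e => e.1 = s ∧ e.2 = M+1)).card : ℤ)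
        - ((E'.filter (fun e => e.1 = s ∧ e.2 = M+1)).card : ℤ) := by
    intro s
    have hA := nu_rec hlt M s
    have hB := nu_rec hlt' M s
    have h1 := hgt (M+1) (by omega) s
    have hcard : (E.filter (fun e => s = M + 1 ∧ e.1 = s)).card
        = (E'.filter (fun e => s = M + 1 ∧ e.1 = s)).card := by
      by_cases hs : s = M + 1
      · have e1 : E.filter (fun e => s = M + 1 ∧ e.1 = s) = beginsAt E (M+1) := by
          subst hs
          apply Finset.filter_congr
          intro e _
          simp
        have e2 : E'.filter (fun e => s = M + 1 ∧ e.1 = s) = beginsAt E' (M+1) := by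
          subst hs
          apply Finset.filter_congr
          intro e _
          simp
        rw [e1, e2, hbeg]
      · rw [Finset.filter_false_of_mem (fun e _ h => hs h.1),
            Finset.filter_false_of_mem (fun e _ h => hs h.1)]
    omega
  obtain ⟨s₀, hs₀⟩ := hne
  have hs₀' : (E.filter (fun e => e.1 = s₀ ∧ e.2 = M+1)).card
      ≠ (E'.filter (fun e => e.1 = s₀ ∧ e.2 = M+1)).card := by
    intro h
    apply hs₀
    have := key s₀
    omega
  have hone : ((s₀, M+1) ∈ E ∧ (s₀, M+1) ∉ E') ∨ ((s₀, M+1) ∈ E' ∧ (s₀, M+1) ∉ E) := by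
    have c1 := pair_card E s₀ (M+1)
    have c2 := pair_card E' s₀ (M+1)
    by_cases hA : (s₀, M+1) ∈ E <;> by_cases hB : (s₀, M+1) ∈ E'
    · rw [if_pos hA] at c1; rw [if_pos hB] at c2; omega
    · exact Or.inl ⟨hA, hB⟩
    · exact Or.inr ⟨hB, hA⟩
    · rw [if_neg hA] at c1; rw [if_neg hB] at c2; omega
  have hEne : (endsAt E (M+1)).Nonempty := by
    rcases hone with ⟨h1, _⟩ | ⟨h1, _⟩
    · exact ⟨(s₀, M+1), by simp [endsAt, h1]⟩
    · exact ends_transfer hE' hE (M+1) hbeg.symm h1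
  have hE'ne : (endsAt E' (M+1)).Nonempty := by
    rcases hone with ⟨h1, _⟩ | ⟨h1, _⟩
    · exact ends_transfer hE hE' (M+1) hbeg h1
    · exact ⟨(s₀, M+1), by simp [endsAt, h1]⟩
  obtain ⟨ex, hex⟩ := hEne
  obtain ⟨ex', hex'⟩ := hE'ne
  have hex2 : ex.2 = M + 1 := (Finset.mem_filter.mp hex).2
  have hex'2 : ex'.2 = M + 1 := (Finset.mem_filter.mp hex').2
  have hxmem : (ex.1, M+1) ∈ E := by
    have : ex ∈ E := (Finset.mem_filter.mp hex).1
    rwa [← hex2, Prod.mk.eta]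
  have hx'mem : (ex'.1, M+1) ∈ E' := by
    have : ex' ∈ E' := (Finset.mem_filter.mp hex').1
    rwa [← hex'2, Prod.mk.eta]
  set x := ex.1 with hxdef
  set x' := ex'.1 with hx'def
  have huniq : ∀ s, (s, M+1) ∈ E → s = x := by
    intro s hs
    have h1 : (s, M+1) ∈ endsAt E (M+1) := by simp [endsAt, hs]
    have := Finset.card_le_one.mp (indeg_le_one hE (M+1)) _ h1 _ hex
    rw [← hex2] at this
    exact congrArg Prod.fst this
  have huniq' : ∀ s, (s, M+1) ∈ E' → s = x' := by
    intro s hs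
    have h1 : (s, M+1) ∈ endsAt E' (M+1) := by simp [endsAt, hs]
    have := Finset.card_le_one.mp (indeg_le_one hE' (M+1)) _ h1 _ hex'
    rw [← hex'2] at this
    exact congrArg Prod.fst this
  have hcE : ∀ s, (E.filter (fun e => e.1 = s ∧ e.2 = M+1)).card = if s = x then 1 else 0 := by
    intro s
    rw [pair_card]
    by_cases h : s = x
    · subst h; simp [hxmem]
    · have : (s, M+1) ∉ E := fun hmem => h (huniq s hmem)
      simp [this, h]
  have hcE' : ∀ s, (E'.filter (fun e => e.1 = s ∧ e.2 = M+1)).card = if s = x' then 1 else 0 := by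
    intro s
    rw [pair_card]
    by_cases h : s = x'
    · subst h; simp [hx'mem]
    · have : (s, M+1) ∉ E' := fun hmem => h (huniq' s hmem)
      simp [this, h]
  have hform : ∀ s, nuC E M s - nuC E' M s =
      (if s = x then 1 else 0) - (if s = x' then 1 else 0) := by
    intro s
    rw [key s, hcE s, hcE' s]
    split_ifs <;> norm_num
  have hxx : x ≠ x' := by
    intro h
    apply hs₀
    have := hform s₀
    rw [h] at this
    omega
  obtain ⟨u, v, v', e, e', hd, hd', hf, hf', hlt1⟩ := hflt
  exact ⟨x, x', hxmem, hx'mem,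
    flowlt_step M u E E' e e' v v' hd hd' hf hf' hlt1 pairIff x x' hxmem hx'mem hxx,
    hform⟩

end Nu
section Shape

lemma count_split (W : Multiset ℤ) (a : ℤ) :
    (W.filter (fun x => x ≤ a)).card = (W.filter (fun x => x ≤ a - 1)).card + W.count a := by
  classical
  have h := Multiset.filter_add_filter (fun x => x ≤ a - 1) (fun x => a = x) W
  have h1 : W.filter (fun x => x ≤ a - 1 ∨ a = x) = W.filter (fun x => x ≤ a) := by
    apply Multiset.filter_congr
    intro x _
    constructor
    · intro h; omega
    · intro h; omega
  have h2 : W.filter (fun x => (x ≤ a - 1) ∧ a = x) = 0 := by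
    rw [Multiset.filter_eq_nil]
    intro x _ hx
    omega
  have h3 : W.count a = (W.filter (fun x => a = x)).card := by
    rw [Multiset.count, Multiset.countP_eq_card_filter]
  rw [h1, h2] at h
  have h4 := congrArg Multiset.card h
  rw [Multiset.card_add, Multiset.card_add] at h4
  simp only [Multiset.card_zero, add_zero] at h4
  omega

lemma multiset_eq_of_counts {U V : Multiset ℤ}
    (h : ∀ m : ℤ, (U.filter (fun x => x ≤ m)).card = (V.filter (fun x => x ≤ m)).card) :
    U = V := by
  ext a
  have h1 := h a
  have h2 := h (a - 1)
  have k1 := count_split U a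
  have k2 := count_split V a
  omega

lemma edge_bounds {E : FlowGraph} {n : ℤ} {lam : ℤ → ℕ} {T : ℤ → Multiset ℤ}
    (hlam : IsComposition n lam) (hreg : IsRegularTab n lam T) (hdef : SigmaDefined E T) :
    ∀ e ∈ E, 1 ≤ e.1 ∧ e.2 ≤ n := by
  intro e he
  have ht := hdef e he
  have h2 := (hreg.2 e.1 e.2 ht).2.2
  refine ⟨?_, h2⟩
  by_contra h
  have hl : lam e.1 = 0 := hlam e.1 (Or.inl (by omega))
  have hc : (T e.1).card = 0 := by rw [hreg.1 e.1, hl]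
  rw [Multiset.card_eq_zero] at hc
  rw [hc] at ht
  simp at ht

lemma nuC_zero_low {E : FlowGraph} (hsrc : ∀ e ∈ E, 1 ≤ e.1) {m : ℤ} (hm : m ≤ 0)
    (s : ℤ) : nuC E m s = 0 := by
  unfold nuC
  rw [Finset.filter_false_of_mem (by intro e he h; have := hsrc e he; omega)]
  simp

lemma nuC_zero_high {E : FlowGraph} {n : ℤ} (hend : ∀ e ∈ E, e.2 ≤ n) {m : ℤ} (hm : n ≤ m)
    (s : ℤ) : nuC E m s = 0 := by
  unfold nuC
  rw [Finset.filter_false_of_mem (by intro e he h; have := hend e he; omega)]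
  simp

lemma shapeR_high {n : ℤ} {lam : ℤ → ℕ} {S : ℤ → Multiset ℤ}
    (hreg : IsRegularTab n lam S) {m : ℤ} (hm : n ≤ m) (r : ℤ) : shapeR S m r = lam r := by
  unfold shapeR
  rw [Multiset.filter_eq_self.mpr (fun x hx => by have := (hreg.2 r x hx).2.2; omega)]
  exact hreg.1 r

lemma shapeR_low {n : ℤ} {lam : ℤ → ℕ} {S : ℤ → Multiset ℤ}
    (hreg : IsRegularTab n lam S) {m : ℤ} (hm : m ≤ 0) (r : ℤ) : shapeR S m r = 0 := by
  unfold shapeR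
  rw [Multiset.filter_eq_nil.mpr (fun x hx => by have := (hreg.2 r x hx).2.1; omega)]
  rfl

lemma shape_sigma {E : FlowGraph} {A B : Finset ℤ} (hE : IsFlow E A B)
    {T : ℤ → Multiset ℤ} (hdef : SigmaDefined E T) (i n : ℤ) (m r : ℤ) :
    (shapeR (sigmaTab E i n T) m r : ℤ)
      = (shapeR T m r : ℤ) + nuC E m r + (if i < r ∧ r ≤ n ∧ r ≤ m then 1 else 0) := by
  classical
  have hod : (outEdges E r).card ≤ 1 := outdeg_le_one hE r
  unfold shapeR sigmaTab
  rw [Multiset.filter_add, Multiset.filter_add, Multiset.card_add, Multiset.card_add]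
  have t3 : (((if i < r ∧ r ≤ n then ({r} : Multiset ℤ) else 0).filter (fun x => x ≤ m)).card : ℤ)
      = if i < r ∧ r ≤ n ∧ r ≤ m then 1 else 0 := by
    by_cases h1 : i < r ∧ r ≤ n
    · rw [if_pos h1, Multiset.filter_singleton]
      by_cases h2 : r ≤ m
      · rw [if_pos h2, if_pos ⟨h1.1, h1.2, h2⟩]; simp
      · rw [if_neg h2, if_neg (by tauto)]; simp
    · rw [if_neg h1, if_neg (by tauto)]; simp
  have t2 : (((Multiset.replicate (outEdges E r).card r).filter (fun x => x ≤ m)).card : ℤ)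
      = if r ≤ m then ((outEdges E r).card : ℤ) else 0 := by
    by_cases h2 : r ≤ m
    · rw [if_pos h2, Multiset.filter_eq_self.mpr
        (fun x hx => by rw [Multiset.eq_of_mem_replicate hx]; exact h2)]
      simp
    · rw [if_neg h2, Multiset.filter_eq_nil.mpr
        (fun x hx => by rw [Multiset.eq_of_mem_replicate hx]; exact h2)]
      simp
  rcases Nat.lt_or_ge (outEdges E r).card 1 with hc | hc
  · -- no outgoing edge at r
    have h0 : outEdges E r = ∅ := Finset.card_eq_zero.mp (by omega)
    have hmap0 : (outEdges E r).val.map Prod.snd = 0 := by rw [h0]; rfl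
    have hnu0 : nuC E m r = 0 := by
      unfold nuC
      have hsub : E.filter (fun e => e.1 = r ∧ r ≤ m ∧ m < e.2) = ∅ := by
        rw [Finset.eq_empty_iff_forall_notMem]
        intro e hme
        have h1 := Finset.mem_filter.mp hme
        have h2 : e ∈ outEdges E r := Finset.mem_filter.mpr ⟨h1.1, h1.2.1⟩
        rw [h0] at h2
        simp at h2
      rw [hsub]
      simp
    rw [hmap0, Multiset.sub_zero, hnu0]
    push_cast
    rw [t3, t2]
    rw [h0]
    simp
  · -- exactly one outgoing edge e₀ at r
    have h1 : (outEdges E r).card = 1 := le_antisymm hod hc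
    obtain ⟨e₀, he₀⟩ := Finset.card_eq_one.mp h1
    have heo : e₀ ∈ outEdges E r := by rw [he₀]; exact Finset.mem_singleton_self e₀
    have heE : e₀ ∈ E := (Finset.mem_filter.mp heo).1
    have he1 : e₀.1 = r := (Finset.mem_filter.mp heo).2
    have ht₀ : e₀.2 ∈ T r := by have := hdef e₀ heE; rwa [he1] at this
    have hlt₀ : r < e₀.2 := by have := hE.edge_lt e₀ heE; omega
    have hmap : (outEdges E r).val.map Prod.snd = ({e₀.2} : Multiset ℤ) := by
      rw [he₀]; rfl
    have hsle : ({e₀.2} : Multiset ℤ) ≤ T r := Multiset.singleton_le.mpr ht₀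
    have hfle : ({e₀.2} : Multiset ℤ).filter (fun x => x ≤ m) ≤ (T r).filter (fun x => x ≤ m) :=
      Multiset.filter_le_filter _ hsle
    have key1 : (((T r - (outEdges E r).val.map Prod.snd).filter (fun x => x ≤ m)).card : ℤ)
        = (((T r).filter (fun x => x ≤ m)).card : ℤ) - (if e₀.2 ≤ m then 1 else 0) := by
      rw [hmap, Multiset.filter_sub, Multiset.card_sub hfle,
        Nat.cast_sub (Multiset.card_le_card hfle), Multiset.filter_singleton]
      by_cases h2 : e₀.2 ≤ m
      · rw [if_pos h2, if_pos h2]; simp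
      · rw [if_neg h2, if_neg h2]; simp
    have hnu : (nuC E m r : ℤ) = if r ≤ m ∧ m < e₀.2 then 1 else 0 := by
      unfold nuC
      have hff : E.filter (fun e => e.1 = r ∧ r ≤ m ∧ m < e.2)
          = (outEdges E r).filter (fun e => r ≤ m ∧ m < e.2) := by
        unfold outEdges
        rw [Finset.filter_filter]
      rw [hff, he₀, Finset.filter_singleton]
      by_cases h2 : r ≤ m ∧ m < e₀.2
      · rw [if_pos h2, if_pos h2]; simp
      · rw [if_neg h2, if_neg h2]; simp
    push_cast
    rw [key1, t2, t3, hnu, h1]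
    split_ifs <;> push_cast <;> omega

end Shape
section Main

lemma make_tabLT {n : ℤ} {S T : ℤ → Multiset ℤ} (M : ℤ) (hM1 : 1 ≤ M) (hMn : M ≤ n)
    (hdom : ∀ k : ℤ, ∑ j ∈ Finset.Icc 1 k, ((shapeR S M j : ℤ) - (shapeR T M j : ℤ)) ≤ 0)
    (hne : ∃ r, (shapeR S M r : ℤ) ≠ (shapeR T M r : ℤ))
    (habove : ∀ m', M < m' → m' ≤ n → ∀ r, (shapeR S m' r : ℤ) = (shapeR T m' r : ℤ)) :
    TabLT n S T := by
  refine ⟨M, hM1, hMn, ?_, ?_, ?_⟩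
  · intro k
    have h := hdom k
    rw [Finset.sum_sub_distrib] at h
    simp only [shapeVec]
    linarith
  · intro hEq
    obtain ⟨r, hr⟩ := hne
    apply hr
    have := congrFun hEq r
    simpa [shapeVec] using this
  · intro m' h1 h2
    funext r
    simp only [shapeVec]
    exact habove m' h1 h2 r

lemma main_key {q : ℕ} (n i : ℤ) (a b : Fin q → ℤ) (lam : ℤ → ℕ)
    (hlam : IsComposition n lam)
    (X : Set (ℤ → Multiset ℤ)) (hXreg : ∀ S ∈ X, IsRegularTab n lam S)
    (T : ℤ → Multiset ℤ) (hTX : T ∈ X)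
    (hTmin : ∀ S ∈ X, ¬ TabLT n S T)
    (E : FlowGraph) (hE : InF i a b E)
    (hEmin : ∀ E' : FlowGraph, InF i a b E' → E' ≠ E → FlowLt E E')
    (hdef : SigmaDefined E T)
    (E' : FlowGraph) (S : ℤ → Multiset ℤ)
    (hE'F : InF i a b E') (hSX : S ∈ X) (hdef' : SigmaDefined E' S)
    (hle : TabLE n (sigmaTab E' i n S) (sigmaTab E i n T)) :
    E' = E ∧ S = T := by
  classical
  have hTreg := hXreg T hTX
  have hSreg := hXreg S hSX
  have hEb := edge_bounds hlam hTreg hdef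
  have hE'b := edge_bounds hlam hSreg hdef'
  have hEf := hE.1
  have hE'f := hE'F.1
  -- difference functions
  have hsig : ∀ m r : ℤ, (shapeVec (sigmaTab E' i n S) m r) - (shapeVec (sigmaTab E i n T) m r)
      = ((shapeR S m r : ℤ) - (shapeR T m r : ℤ)) - (nuC E m r - nuC E' m r) := by
    intro m r
    simp only [shapeVec]
    rw [shape_sigma hE'f hdef' i n m r, shape_sigma hEf hdef i n m r]
    ring
  have tr_eq : ∀ m : ℤ, shapeVec (sigmaTab E' i n S) m = shapeVec (sigmaTab E i n T) m ↔
      (∀ r : ℤ, (shapeR S m r : ℤ) - (shapeR T m r : ℤ) = nuC E m r - nuC E' m r) := by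
    intro m
    constructor
    · intro h r
      have h1 := congrFun h r
      have h2 := hsig m r
      rw [h1] at h2
      linarith
    · intro h
      funext r
      have h2 := hsig m r
      have h3 := h r
      linarith
  have tr_dom : ∀ m : ℤ, DomLE (shapeVec (sigmaTab E' i n S) m) (shapeVec (sigmaTab E i n T) m) →
      ∀ k : ℤ, (∑ j ∈ Finset.Icc 1 k, ((shapeR S m j : ℤ) - (shapeR T m j : ℤ)))
        ≤ ∑ j ∈ Finset.Icc 1 k, (nuC E m j - nuC E' m j) := by
    intro m h k
    have h1 := h k
    have h2 : ∑ j ∈ Finset.Icc 1 k,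
        ((shapeVec (sigmaTab E' i n S) m) j - (shapeVec (sigmaTab E i n T) m) j)
        = ∑ j ∈ Finset.Icc 1 k,
          (((shapeR S m j : ℤ) - (shapeR T m j : ℤ)) - (nuC E m j - nuC E' m j)) :=
      Finset.sum_congr rfl (fun j _ => hsig m j)
    rw [Finset.sum_sub_distrib, Finset.sum_sub_distrib] at h2
    linarith
  -- vanishing facts
  have hDhigh : ∀ m : ℤ, n ≤ m → ∀ r : ℤ, (shapeR S m r : ℤ) - (shapeR T m r : ℤ) = 0 := by
    intro m hm r
    rw [shapeR_high hSreg hm, shapeR_high hTreg hm]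
    ring
  have hDlow : ∀ m : ℤ, m ≤ 0 → ∀ r : ℤ, (shapeR S m r : ℤ) - (shapeR T m r : ℤ) = 0 := by
    intro m hm r
    rw [shapeR_low hSreg hm, shapeR_low hTreg hm]
    ring
  have hWhigh : ∀ m : ℤ, n ≤ m → ∀ s : ℤ, nuC E m s - nuC E' m s = 0 := by
    intro m hm s
    rw [nuC_zero_high (fun e he => (hEb e he).2) hm, nuC_zero_high (fun e he => (hE'b e he).2) hm]
    ring
  have hWlow : ∀ m : ℤ, m ≤ 0 → ∀ s : ℤ, nuC E m s - nuC E' m s = 0 := by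
    intro m hm s
    rw [nuC_zero_low (fun e he => (hEb e he).1) hm, nuC_zero_low (fun e he => (hE'b e he).1) hm]
    ring
  -- the case E' = E, with a chain difference, leads to TabLT S T at that level
  by_cases hEE : E' = E
  · -- flows equal; show S = T
    have hW0 : ∀ m s : ℤ, nuC E m s - nuC E' m s = 0 := by
      intro m s; rw [hEE]; ring
    have hDall : ∀ m r : ℤ, (shapeR S m r : ℤ) = (shapeR T m r : ℤ) := by
      intro m r
      rcases hle with hltc | heqc
      · obtain ⟨m0, hm01, hm0n, hdom0, hneq0, habove0⟩ := hltc
        exfalso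
        apply hTmin S hSX
        refine make_tabLT m0 hm01 hm0n ?_ ?_ ?_
        · intro k
          have := tr_dom m0 hdom0 k
          have hz : ∑ j ∈ Finset.Icc 1 k, (nuC E m0 j - nuC E' m0 j) = 0 :=
            Finset.sum_eq_zero (fun j _ => hW0 m0 j)
          linarith
        · by_contra hc
          push_neg at hc
          apply hneq0
          apply (tr_eq m0).mpr
          intro r'
          rw [hW0 m0 r', hc r']
          ring
        · intro m' h1 h2 r'
          have := (tr_eq m').mp (habove0 m' h1 h2) r'
          rw [hW0 m' r'] at this
          linarith
      · by_cases hm : 1 ≤ m ∧ m ≤ n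
        · have := (tr_eq m).mp (heqc m hm.1 hm.2) r
          rw [hW0 m r] at this
          linarith
        · rcases (by omega : m ≤ 0 ∨ n ≤ m) with h | h
          · have := hDlow m h r; linarith
          · have := hDhigh m h r; linarith
    have hST : S = T := by
      funext r
      apply multiset_eq_of_counts
      intro m
      have h1 := hDall m r
      unfold shapeR at h1
      exact_mod_cast (by linarith : ((((S r).filter (fun x => x ≤ m)).card : ℤ))
        = (((T r).filter (fun x => x ≤ m)).card : ℤ))
    exact ⟨hEE, hST⟩
  · -- flows differ: derive a contradiction
    exfalso
    -- top level M where the nu's differ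
    have hPbdd : ∃ bnd : ℤ, ∀ z : ℤ, (∃ s, nuC E z s ≠ nuC E' z s) → z ≤ bnd := by
      refine ⟨n, fun z hz => ?_⟩
      by_contra h
      push_neg at h
      obtain ⟨s, hs⟩ := hz
      apply hs
      have := hWhigh z (by omega) s
      linarith
    have hPne : ∃ z : ℤ, ∃ s, nuC E z s ≠ nuC E' z s := by
      by_contra h
      push_neg at h
      exact hEE (flow_eq_of_nu_eq hE'f.edge_lt hEf.edge_lt (fun m s => (h m s).symm))
    obtain ⟨M, hMP, hMmax⟩ := Int.exists_greatest_of_bdd hPbdd hPne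
    have hM1 : 1 ≤ M := by
      by_contra h
      push_neg at h
      obtain ⟨s, hs⟩ := hMP
      apply hs
      have := hWlow M (by omega) s
      linarith
    have hMn : M ≤ n := by
      by_contra h
      push_neg at h
      obtain ⟨s, hs⟩ := hMP
      apply hs
      have := hWhigh M (by omega) s
      linarith
    have hgt : ∀ m, M < m → ∀ s, nuC E m s = nuC E' m s := by
      intro m hm s
      by_contra hne2
      have := hMmax m ⟨s, hne2⟩
      omega
    obtain ⟨x, x', hxE, hx'E', hxx', hform⟩ :=
      core_lemma hEf hE'f M hgt hMP (hEmin E' hE'F hEE)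
    have hx'1 : 1 ≤ x' := (hE'b _ hx'E').1
    have hWsum : ∀ k : ℤ, ∑ j ∈ Finset.Icc 1 k, (nuC E M j - nuC E' M j)
        = (if x ∈ Finset.Icc 1 k then (1:ℤ) else 0)
          - (if x' ∈ Finset.Icc 1 k then (1:ℤ) else 0) := by
      intro k
      rw [Finset.sum_congr rfl (fun j _ => hform j), Finset.sum_sub_distrib,
        Finset.sum_ite_eq' (Finset.Icc 1 k) x (fun _ => (1:ℤ)),
        Finset.sum_ite_eq' (Finset.Icc 1 k) x' (fun _ => (1:ℤ))]
    have hWsum_le : ∀ k : ℤ, ∑ j ∈ Finset.Icc 1 k, (nuC E M j - nuC E' M j) ≤ 0 := by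
      intro k
      rw [hWsum k]
      by_cases hx : x ∈ Finset.Icc 1 k
      · rw [if_pos hx, if_pos (by simp only [Finset.mem_Icc] at hx ⊢; omega)]
        norm_num
      · rw [if_neg hx]
        split_ifs <;> norm_num
    have hWneg : ∑ j ∈ Finset.Icc 1 x', (nuC E M j - nuC E' M j) < 0 := by
      rw [hWsum x', if_neg (by simp only [Finset.mem_Icc]; omega),
        if_pos (by simp only [Finset.mem_Icc]; omega)]
      norm_num
    have hWMx : nuC E M x - nuC E' M x ≠ 0 := by
      rw [hform x, if_pos rfl, if_neg (by omega)]
      norm_num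
    rcases hle with hltc | heqc
    · obtain ⟨m0, hm01, hm0n, hdom0, hneq0, habove0⟩ := hltc
      rcases lt_trichotomy M m0 with hc | hc | hc
      · -- M < m0 : W vanishes at m0 and above
        apply hTmin S hSX
        refine make_tabLT m0 hm01 hm0n ?_ ?_ ?_
        · intro k
          have h1 := tr_dom m0 hdom0 k
          have hz : ∑ j ∈ Finset.Icc 1 k, (nuC E m0 j - nuC E' m0 j) = 0 :=
            Finset.sum_eq_zero (fun j _ => by rw [hgt m0 hc j]; ring)
          linarith
        · by_contra hcc
          push_neg at hcc
          apply hneq0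
          apply (tr_eq m0).mpr
          intro r'
          rw [hgt m0 hc r', hcc r']
          ring
        · intro m' h1 h2 r'
          have h3 := (tr_eq m').mp (habove0 m' h1 h2) r'
          rw [hgt m' (by omega) r'] at h3
          linarith
      · -- M = m0
        subst hc
        by_cases hD0 : ∀ r : ℤ, (shapeR S M r : ℤ) = (shapeR T M r : ℤ)
        · -- shape parts equal at M, so partial sums of W must be ≥ 0: contradiction
          have h1 := tr_dom M hdom0 x'
          have hz : ∑ j ∈ Finset.Icc 1 x',
              ((shapeR S M j : ℤ) - (shapeR T M j : ℤ)) = 0 :=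
            Finset.sum_eq_zero (fun j _ => by rw [hD0 j]; ring)
          linarith
        · apply hTmin S hSX
          push_neg at hD0
          refine make_tabLT M hM1 hMn ?_ hD0 ?_
          · intro k
            have h1 := tr_dom M hdom0 k
            have h2 := hWsum_le k
            linarith
          · intro m' h1 h2 r'
            have h3 := (tr_eq m').mp (habove0 m' h1 h2) r'
            rw [hgt m' (by omega) r'] at h3
            linarith
      · -- M > m0 : D M = W M ≠ 0
        apply hTmin S hSX
        have hDM : ∀ r : ℤ, (shapeR S M r : ℤ) - (shapeR T M r : ℤ)
            = nuC E M r - nuC E' M r :=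
          (tr_eq M).mp (habove0 M hc hMn)
        refine make_tabLT M hM1 hMn ?_ ?_ ?_
        · intro k
          have h2 := hWsum_le k
          have h3 : ∑ j ∈ Finset.Icc 1 k, ((shapeR S M j : ℤ) - (shapeR T M j : ℤ))
              = ∑ j ∈ Finset.Icc 1 k, (nuC E M j - nuC E' M j) :=
            Finset.sum_congr rfl (fun j _ => hDM j)
          linarith
        · refine ⟨x, ?_⟩
          have := hDM x
          intro hcc
          apply hWMx
          linarith
        · intro m' h1 h2 r'
          have h3 := (tr_eq m').mp (habove0 m' (by omega) h2) r'
          rw [hgt m' (by omega) r'] at h3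
          linarith
    · -- chains of the sigmas all equal
      apply hTmin S hSX
      have hDM : ∀ r : ℤ, (shapeR S M r : ℤ) - (shapeR T M r : ℤ)
          = nuC E M r - nuC E' M r :=
        (tr_eq M).mp (heqc M hM1 hMn)
      refine make_tabLT M hM1 hMn ?_ ?_ ?_
      · intro k
        have h2 := hWsum_le k
        have h3 : ∑ j ∈ Finset.Icc 1 k, ((shapeR S M j : ℤ) - (shapeR T M j : ℤ))
            = ∑ j ∈ Finset.Icc 1 k, (nuC E M j - nuC E' M j) :=
          Finset.sum_congr rfl (fun j _ => hDM j)
        linarith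
      · refine ⟨x, ?_⟩
        have := hDM x
        intro hcc
        apply hWMx
        linarith
      · intro m' h1 h2 r'
        have h3 := (tr_eq m').mp (heqc m' (by omega) h2) r'
        rw [hgt m' (by omega) r'] at h3
        linarith

end Main

/-- Corollary 36 (key part): let `X` be a nonempty set of regular row standard
`lam`-tableaux with `T` a minimal element, and let `Γ` be the smallest element
of `𝓕_i(a_1,…,a_q; b_1,…,b_q)`, with `σ_{Γ,i}(T)` well-defined. Then for every
`Γ' ∈ 𝓕_i(a_1,…,a_q; b_1,…,b_q)` and `S ∈ X` with `σ_{Γ',i}(S)` well-defined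
and `(Γ', S) ≠ (Γ, T)`, we have `σ_{Γ',i}(S) ≰ σ_{Γ,i}(T)`. In particular
`σ_{Γ,i}(T)` occurs exactly once among the `σ_{Γ',i}(S)` and is a minimal
element of the set of tableaux occurring. -/
theorem statement19 {q : ℕ} (n i : ℤ) (a b : Fin q → ℤ)
    (ha : StrictMono a) (hb : StrictAnti b)
    (hai : ∀ j, a j ≤ i) (hbi : ∀ j, i < b j)
    (h1 : ∀ j, 1 ≤ a j) (h2 : ∀ j, b j ≤ n)
    (lam : ℤ → ℕ) (hlam : IsComposition n lam)
    (X : Set (ℤ → Multiset ℤ)) (hXne : X.Nonempty)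
    (hXreg : ∀ S ∈ X, IsRegularTab n lam S)
    (T : ℤ → Multiset ℤ) (hTX : T ∈ X)
    (hTmin : ∀ S ∈ X, ¬ TabLT n S T)
    (E : FlowGraph) (hE : InF i a b E)
    (hEmin : ∀ E' : FlowGraph, InF i a b E' → E' ≠ E → FlowLt E E')
    (hdef : SigmaDefined E T) :
    (∀ (E' : FlowGraph) (S : ℤ → Multiset ℤ),
        InF i a b E' → S ∈ X → SigmaDefined E' S → (E', S) ≠ (E, T) →
        ¬ TabLE n (sigmaTab E' i n S) (sigmaTab E i n T)) ∧
    (∀ (E' : FlowGraph) (S : ℤ → Multiset ℤ),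
        InF i a b E' → S ∈ X → SigmaDefined E' S →
        sigmaTab E' i n S = sigmaTab E i n T → E' = E ∧ S = T) ∧
    (∀ (E' : FlowGraph) (S : ℤ → Multiset ℤ),
        InF i a b E' → S ∈ X → SigmaDefined E' S →
        ¬ TabLT n (sigmaTab E' i n S) (sigmaTab E i n T)) := by

  refine ⟨?_, ?_, ?_⟩
  · intro E' S hE'F hSX hdef' hne hle
    obtain ⟨g1, g2⟩ := main_key n i a b lam hlam X hXreg T hTX hTmin E hE hEmin hdef
      E' S hE'F hSX hdef' hle
    apply hne
    rw [g1, g2]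
  · intro E' S hE'F hSX hdef' heq
    exact main_key n i a b lam hlam X hXreg T hTX hTmin E hE hEmin hdef
      E' S hE'F hSX hdef' (Or.inr (fun m _ _ => by rw [heq]))
  · intro E' S hE'F hSX hdef' hlt
    obtain ⟨g1, g2⟩ := main_key n i a b lam hlam X hXreg T hTX hTmin E hE hEmin hdef
      E' S hE'F hSX hdef' (Or.inl hlt)
    rw [g1, g2] at hlt
    obtain ⟨m0, _, _, _, hne0, _⟩ := hlt
    exact hne0 rfl
end
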